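/- arXiv:0908.2616 — 4 statements merged into one kernel-verified Lean document; each statement's English description precedes it below -/
import Mathlib

section
/- (Key step in the proof of Theorem 1(i).) Consider the interval design with target p ∈ (0,1), margins Δp₁, Δp₂ > 0, and MTD u*. Suppose F(u*) ∈ (p−Δp₁, p+Δp₂) and u* is the unique level u with F(u) ∈ [p−Δp₁, p+Δp₂]. Then almost surely the MTD is visited infinitely often: n_{u*}(n) → ∞ as n → ∞. Equivalently, the event that all levels visited infinitely often lie strictly above u*, and the event that they all lie strictly below u*, each have probability zero. -/
open MeasureTheory ProbabilityTheory Filter Topology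
open scoped NNReal ENNReal

noncomputable section

/-- Toxicity response of subject `i`: `Y i = 1` iff `U i ≤ F (X i)`. -/
def resp {Ω : Type*} (F : ℕ → ℝ) (U : ℕ → Ω → ℝ) (X : ℕ → Ω → ℕ) (i : ℕ) (ω : Ω) : ℝ :=
  if U i ω ≤ F (X i ω) then 1 else 0

/-- Number of subjects among the first `n` assigned to dose level `u`. -/
def visits {Ω : Type*} (X : ℕ → Ω → ℕ) (u n : ℕ) (ω : Ω) : ℕ :=
  ((Finset.Icc 1 n).filter fun i => X i ω = u).card

/-- The martingale `M_n = ∑_{i=1}^n 1{X_i = u} (Y_i − F(u))`. -/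
def Mart {Ω : Type*} (F : ℕ → ℝ) (U : ℕ → Ω → ℝ) (X : ℕ → Ω → ℕ) (u n : ℕ) (ω : Ω) : ℝ :=
  ∑ i ∈ Finset.Icc 1 n, (if X i ω = u then (1:ℝ) else 0) * (resp F U X i ω - F u)

/-- Empirical toxicity frequency at dose `u` after `n` subjects. -/
def Fhat {Ω : Type*} (F : ℕ → ℝ) (U : ℕ → Ω → ℝ) (X : ℕ → Ω → ℕ) (u n : ℕ) (ω : Ω) : ℝ :=
  (∑ i ∈ Finset.Icc 1 n, if X i ω = u then resp F U X i ω else 0) / (visits X u n ω : ℝ)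

/-- The filtration `ℱ_n = σ(U_1, …, U_n)`. -/
def natFilt {Ω : Type*} [mΩ : MeasurableSpace Ω] (U : ℕ → Ω → ℝ)
    (hU : ∀ i, Measurable (U i)) : Filtration ℕ mΩ where
  seq n := ⨆ i ∈ Finset.Icc 1 n, MeasurableSpace.comap (U i) inferInstance
  mono' := fun a b hab => by
    refine iSup₂_le fun i hi => ?_
    refine le_iSup₂_of_le i ?_ le_rfl
    rw [Finset.mem_Icc] at hi ⊢
    exact ⟨hi.1, hi.2.trans hab⟩
  le' := fun n => iSup₂_le fun i _ => (hU i).comap_le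

/-- The interval design transition rule with target `p` and margins `Δ₁, Δ₂`:
repeat the current dose if the empirical rate at it lies in `(p−Δ₁, p+Δ₂)`, escalate one
level (boundary permitting) if it is `≤ p−Δ₁`, and de-escalate one level (boundary
permitting) if it is `≥ p+Δ₂`. -/
def intervalRule {Ω : Type*} (m : ℕ) (p Δ₁ Δ₂ : ℝ) (F : ℕ → ℝ) (U : ℕ → Ω → ℝ)
    (X : ℕ → Ω → ℕ) : Prop :=
  ∀ n, 1 ≤ n → ∀ ω : Ω,
    (p - Δ₁ < Fhat F U X (X n ω) n ω → Fhat F U X (X n ω) n ω < p + Δ₂ →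
      X (n + 1) ω = X n ω) ∧
    (Fhat F U X (X n ω) n ω ≤ p - Δ₁ → X (n + 1) ω = min (X n ω + 1) m) ∧
    (p + Δ₂ ≤ Fhat F U X (X n ω) n ω → X (n + 1) ω = max (X n ω - 1) 1)

namespace IDAux

variable {Ω : Type*}

lemma visits_eq_sum (X : ℕ → Ω → ℕ) (u n : ℕ) (ω : Ω) :
    visits X u n ω = ∑ i ∈ Finset.Icc 1 n, if X i ω = u then 1 else 0 :=
  Finset.card_filter _ _

lemma visits_zero (X : ℕ → Ω → ℕ) (u : ℕ) (ω : Ω) : visits X u 0 ω = 0 := by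
  simp [visits]

lemma visits_succ (X : ℕ → Ω → ℕ) (u n : ℕ) (ω : Ω) :
    visits X u (n+1) ω = visits X u n ω + if X (n+1) ω = u then 1 else 0 := by
  rw [visits_eq_sum, visits_eq_sum, Finset.sum_Icc_succ_top (by omega : 1 ≤ n+1)]

lemma visits_mono (X : ℕ → Ω → ℕ) (u : ℕ) (ω : Ω) :
    Monotone fun n => visits X u n ω := by
  apply monotone_nat_of_le_succ
  intro n
  rw [visits_succ]
  omega

lemma visits_le (X : ℕ → Ω → ℕ) (u n : ℕ) (ω : Ω) : visits X u n ω ≤ n := by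
  calc visits X u n ω ≤ (Finset.Icc 1 n).card := Finset.card_filter_le _ _
  _ = n := by simp

lemma visits_pos (X : ℕ → Ω → ℕ) {u i : ℕ} {ω : Ω} (hi : 1 ≤ i) (hX : X i ω = u) :
    1 ≤ visits X u i ω := by
  have : i ∈ (Finset.Icc 1 i).filter fun j => X j ω = u := by
    simp [Finset.mem_filter, hi, hX]
  exact Finset.card_pos.mpr ⟨i, this⟩

lemma visits_lt (X : ℕ → Ω → ℕ) {u i j : ℕ} {ω : Ω} (hij : i < j) (hj : X j ω = u) :
    visits X u i ω < visits X u j ω := by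
  obtain ⟨k, rfl⟩ : ∃ k, j = k + 1 := ⟨j - 1, by omega⟩
  have h1 : visits X u i ω ≤ visits X u k ω := visits_mono X u ω (by omega)
  rw [visits_succ, if_pos hj]
  omega

lemma visits_const {X : ℕ → Ω → ℕ} {u : ℕ} {ω : Ω} {N n : ℕ} (hNn : N ≤ n)
    (h : ∀ i, N < i → i ≤ n → X i ω ≠ u) : visits X u n ω = visits X u N ω := by
  induction n with
  | zero => have : N = 0 := by omega
            rw [this]
  | succ k ih =>
    rcases Nat.eq_or_lt_of_le hNn with h'|h'
    · rw [h']
    · have hk : N ≤ k := by omega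
      rw [visits_succ, if_neg (h _ (by omega) le_rfl), add_zero]
      exact ih hk fun i hi1 hi2 => h i hi1 (by omega)

lemma tendsto_visits_iff (X : ℕ → Ω → ℕ) (u : ℕ) (ω : Ω) :
    Tendsto (fun n => visits X u n ω) atTop atTop ↔ ∃ᶠ n in atTop, X n ω = u := by
  constructor
  · intro h
    rw [frequently_atTop]
    intro N
    obtain ⟨n, hn⟩ := (tendsto_atTop.mp h (visits X u N ω + 1)).exists
    by_contra hc
    push_neg at hc
    have hNn : N ≤ n := by
      by_contra hNn
      push_neg at hNn
      have h2 : visits X u n ω ≤ visits X u N ω := visits_mono X u ω (le_of_lt hNn)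
      omega
    rw [visits_const hNn (fun i h1 h2 => hc i (by omega))] at hn
    omega
  · intro h
    have key : ∀ K, ∃ n, K ≤ visits X u n ω := by
      intro K
      induction K with
      | zero => exact ⟨0, Nat.zero_le _⟩
      | succ k ih =>
        obtain ⟨n, hn⟩ := ih
        obtain ⟨j, hj1, hj2⟩ := frequently_atTop.mp h (n+1)
        refine ⟨j, ?_⟩
        have h3 := visits_lt X (u := u) (ω := ω) (by omega : n < j) hj2
        omega
    apply tendsto_atTop_atTop.mpr
    intro K
    obtain ⟨n, hn⟩ := key K
    exact ⟨n, fun n' hn' => le_trans hn (visits_mono X u ω hn')⟩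

lemma sum_inv_sq_le (n : ℕ) : ∑ k ∈ Finset.Icc 1 n, ((k:ℝ)⁻¹)^2 ≤ 2 := by
  rcases Nat.eq_zero_or_pos n with rfl|hn
  · simp
  · have key : ∀ n : ℕ, 1 ≤ n → ∑ k ∈ Finset.Icc 1 n, ((k:ℝ)⁻¹)^2 ≤ 2 - (n:ℝ)⁻¹ := by
      intro n hn
      induction n with
      | zero => omega
      | succ k ih =>
        rcases Nat.eq_zero_or_pos k with rfl|hk
        · norm_num
        · have hk' : (1:ℝ) ≤ k := by exact_mod_cast hk
          have h0 : (0:ℝ) < k := by linarith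
          have h1 : (0:ℝ) < (k:ℝ)+1 := by linarith
          rw [Finset.sum_Icc_succ_top (by omega : 1 ≤ k+1)]
          have step : (((k+1:ℕ):ℝ)⁻¹)^2 ≤ (k:ℝ)⁻¹ - ((k:ℝ)+1)⁻¹ := by
            have e : (k:ℝ)⁻¹ - ((k:ℝ)+1)⁻¹ = ((k:ℝ)*((k:ℝ)+1))⁻¹ := by
              field_simp
              ring
            have e2 : (((k+1:ℕ):ℝ)⁻¹)^2 = (((k:ℝ)+1)*((k:ℝ)+1))⁻¹ := by
              push_cast
              rw [mul_inv, ← sq]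
            rw [e, e2]
            apply inv_anti₀ (by positivity)
            nlinarith
          have ihk := ih hk
          push_cast
          push_cast at step ihk
          linarith
    calc ∑ k ∈ Finset.Icc 1 n, ((k:ℝ)⁻¹)^2 ≤ 2 - (n:ℝ)⁻¹ := key n hn
    _ ≤ 2 := by
        have : (0:ℝ) < n := by exact_mod_cast hn
        have : (0:ℝ) ≤ (n:ℝ)⁻¹ := by positivity
        linarith

lemma sum_weight_le (X : ℕ → Ω → ℕ) (a n : ℕ) (ω : Ω) :
    ∑ i ∈ Finset.Icc 1 n, (if X i ω = a then (1:ℝ) else 0) * (((visits X a i ω : ℕ):ℝ)⁻¹)^2 ≤ 2 := by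
  have h1 : ∑ i ∈ Finset.Icc 1 n, (if X i ω = a then (1:ℝ) else 0) * (((visits X a i ω : ℕ):ℝ)⁻¹)^2
      = ∑ i ∈ (Finset.Icc 1 n).filter (fun i => X i ω = a), (((visits X a i ω : ℕ):ℝ)⁻¹)^2 := by
    rw [Finset.sum_filter]
    apply Finset.sum_congr rfl
    intro i _
    by_cases h : X i ω = a <;> simp [h]
  rw [h1]
  set s := (Finset.Icc 1 n).filter (fun i => X i ω = a) with hs
  have hinj : Set.InjOn (fun i => visits X a i ω) s := by
    intro i hi j hj hij
    simp only [hs, Finset.coe_filter, Set.mem_setOf_eq, Finset.mem_Icc] at hi hj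
    by_contra hne
    rcases Nat.lt_or_ge i j with h'|h'
    · exact absurd hij (Nat.ne_of_lt (visits_lt X h' hj.2))
    · have h'' : j < i := by omega
      exact absurd hij.symm (Nat.ne_of_lt (visits_lt X h'' hi.2))
  have h2 : ∑ i ∈ s, (((visits X a i ω : ℕ):ℝ)⁻¹)^2
      = ∑ k ∈ s.image (fun i => visits X a i ω), (((k:ℕ):ℝ)⁻¹)^2 := by
    rw [Finset.sum_image]
    intro i hi j hj hij
    exact hinj (Finset.mem_coe.mpr hi) (Finset.mem_coe.mpr hj) hij
  rw [h2]
  have hsub : s.image (fun i => visits X a i ω) ⊆ Finset.Icc 1 n := by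
    intro k hk
    obtain ⟨i, hi, rfl⟩ := Finset.mem_image.mp hk
    simp only [hs, Finset.mem_filter, Finset.mem_Icc] at hi
    rw [Finset.mem_Icc]
    exact ⟨visits_pos X hi.1.1 hi.2, le_trans (visits_le X a i ω) hi.1.2⟩
  calc ∑ k ∈ s.image (fun i => visits X a i ω), (((k:ℕ):ℝ)⁻¹)^2
      ≤ ∑ k ∈ Finset.Icc 1 n, (((k:ℕ):ℝ)⁻¹)^2 :=
        Finset.sum_le_sum_of_subset_of_nonneg hsub (fun k _ _ => by positivity)
  _ ≤ 2 := sum_inv_sq_le n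

lemma kronecker {z : ℕ → ℝ} {c : ℝ}
    (h : Tendsto (fun k => ∑ j ∈ Finset.Icc 1 k, z j / (j:ℝ)) atTop (𝓝 c)) :
    Tendsto (fun k => (∑ j ∈ Finset.Icc 1 k, z j) / (k:ℝ)) atTop (𝓝 0) := by
  set s := fun k => ∑ j ∈ Finset.Icc 1 k, z j / (j:ℝ) with hsdef
  have hstep : ∀ k : ℕ, z (k+1) = ((k:ℝ)+1) * (s (k+1) - s k) := by
    intro k
    have : s (k+1) = s k + z (k+1) / ((k+1:ℕ):ℝ) := by
      rw [hsdef]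
      simp only
      rw [Finset.sum_Icc_succ_top (by omega : 1 ≤ k+1)]
    rw [this]
    push_cast
    field_simp
    ring
  have hb : ∀ k : ℕ, ∑ j ∈ Finset.Icc 1 k, z j = (k:ℝ) * s k - ∑ j ∈ Finset.range k, s j := by
    intro k
    induction k with
    | zero => simp [hsdef]
    | succ k ih =>
      rw [Finset.sum_Icc_succ_top (by omega : 1 ≤ k+1), ih, Finset.sum_range_succ, hstep k]
      push_cast
      ring
  have hces := h.cesaro
  have htend : Tendsto (fun k : ℕ => s k - (k:ℝ)⁻¹ * ∑ j ∈ Finset.range k, s j) atTop (𝓝 0) := by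
    have := h.sub hces
    simpa using this
  apply htend.congr'
  filter_upwards [eventually_ge_atTop 1] with k hk
  have hk0 : ((k:ℝ)) ≠ 0 := by positivity
  rw [hb k]
  field_simp

/-- Discrete intermediate value property for walks with upward steps of size ≤ 1. -/
lemma walk_cross {f : ℕ → ℕ} {n₁ n₂ c : ℕ} (h₁ : n₁ ≤ n₂)
    (hstep : ∀ k, n₁ ≤ k → k < n₂ → f (k+1) ≤ f k + 1)
    (ha : f n₁ ≤ c) (hb : c ≤ f n₂) : ∃ k, n₁ ≤ k ∧ k ≤ n₂ ∧ f k = c := by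
  classical
  have hex : ∃ k, n₁ ≤ k ∧ k ≤ n₂ ∧ c ≤ f k := ⟨n₂, h₁, le_rfl, hb⟩
  obtain ⟨hk1, hk2, hk3⟩ := Nat.find_spec hex
  refine ⟨Nat.find hex, hk1, hk2, ?_⟩
  rcases Nat.eq_or_lt_of_le hk1 with h'|h'
  · rw [← h'] at hk3 ⊢
    omega
  · have hkm : ¬ (n₁ ≤ Nat.find hex - 1 ∧ Nat.find hex - 1 ≤ n₂ ∧ c ≤ f (Nat.find hex - 1)) :=
      Nat.find_min hex (by omega)
    push_neg at hkm
    have h4 : f (Nat.find hex - 1) < c := hkm (by omega) (by omega)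
    have h5 : f (Nat.find hex) ≤ f (Nat.find hex - 1) + 1 := by
      have h6 := hstep (Nat.find hex - 1) (by omega) (by omega)
      have hk' : Nat.find hex - 1 + 1 = Nat.find hex := by omega
      rwa [hk'] at h6
    omega


section Walk

variable {Ω : Type*} {m : ℕ} {F : ℕ → ℝ} {U : ℕ → Ω → ℝ} {X : ℕ → Ω → ℕ}
  {p Δ₁ Δ₂ : ℝ} {ustar : ℕ}

lemma rule_cases {ω : Ω} (hrule : intervalRule m p Δ₁ Δ₂ F U X) (n : ℕ) (hn : 1 ≤ n) :
    X (n+1) ω = X n ω ∨ X (n+1) ω = min (X n ω + 1) m ∨ X (n+1) ω = max (X n ω - 1) 1 := by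
  obtain ⟨h1, h2, h3⟩ := hrule n hn ω
  rcases le_or_gt (Fhat F U X (X n ω) n ω) (p - Δ₁) with h|h
  · exact Or.inr (Or.inl (h2 h))
  rcases le_or_gt (p + Δ₂) (Fhat F U X (X n ω) n ω) with h'|h'
  · exact Or.inr (Or.inr (h3 h'))
  · exact Or.inl (h1 h h')

lemma step_le {ω : Ω} (hrule : intervalRule m p Δ₁ Δ₂ F U X)
    (hrange : ∀ n, 1 ≤ n → X n ω ∈ Set.Icc 1 m) (n : ℕ) (hn : 1 ≤ n) :
    X (n+1) ω ≤ X n ω + 1 := by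
  have h := hrange n hn
  rw [Set.mem_Icc] at h
  rcases rule_cases (ω := ω) hrule n hn with h'|h'|h' <;> omega

/-- Some level in `[1,m]` is visited infinitely often. -/
lemma exists_frequent {ω : Ω} (hm : 1 ≤ m)
    (hrange : ∀ n, 1 ≤ n → X n ω ∈ Set.Icc 1 m) :
    ∃ u ∈ Finset.Icc 1 m, ∃ᶠ n in atTop, X n ω = u := by
  by_contra hc
  push_neg at hc
  have h2 : ∀ u ∈ Finset.Icc 1 m, ∀ᶠ n in atTop, X n ω ≠ u := by
    intro u hu
    exact hc u hu
  have h3 : ∀ᶠ n in atTop, ∀ u ∈ Finset.Icc 1 m, X n ω ≠ u :=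
    (Finset.Icc 1 m).eventually_all.mpr h2
  have h4 : ∀ᶠ n : ℕ in atTop, False := by
    filter_upwards [h3, eventually_ge_atTop 1] with n h4 h5
    have h6 := hrange n h5
    rw [Set.mem_Icc] at h6
    exact h4 (X n ω) (by rw [Finset.mem_Icc]; exact h6) rfl
  obtain ⟨n, hn⟩ := h4.exists
  exact hn

lemma det_above {ω : Ω} (hm : 1 ≤ m)
    (hrule : intervalRule m p Δ₁ Δ₂ F U X)
    (hrange : ∀ n, 1 ≤ n → X n ω ∈ Set.Icc 1 m)
    (hustar : ustar ∈ Set.Icc 1 m)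
    (hFup : ∀ u, u ∈ Set.Icc 1 m → ustar < u → p + Δ₂ < F u)
    (hconv : ∀ a, a ∈ Set.Icc 1 m → Tendsto (fun n => visits X a n ω) atTop atTop →
        Tendsto (fun n => Fhat F U X a n ω) atTop (𝓝 (F a))) :
    ¬ (∀ u, (∃ᶠ n in atTop, X n ω = u) → ustar < u) := by
  intro H
  classical
  set T := (Finset.Icc 1 m).filter (fun u => ∃ᶠ n in atTop, X n ω = u) with hT
  have hTne : T.Nonempty := by
    obtain ⟨u, hu1, hu2⟩ := exists_frequent hm hrange
    exact ⟨u, by rw [hT, Finset.mem_filter]; exact ⟨hu1, hu2⟩⟩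
  set a := T.min' hTne with ha
  have haT : a ∈ T := T.min'_mem hTne
  rw [hT, Finset.mem_filter, Finset.mem_Icc] at haT
  obtain ⟨⟨ha1, ha2⟩, hafreq⟩ := haT
  have haus : ustar < a := H a hafreq
  have hust1 : 1 ≤ ustar := hustar.1
  have hFa : p + Δ₂ < F a := hFup a (Set.mem_Icc.mpr ⟨ha1, ha2⟩) haus
  have htv : Tendsto (fun n => visits X a n ω) atTop atTop :=
    (tendsto_visits_iff X a ω).mpr hafreq
  have hFhat := hconv a (Set.mem_Icc.mpr ⟨ha1, ha2⟩) htv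
  have hFhatge : ∀ᶠ n in atTop, p + Δ₂ ≤ Fhat F U X a n ω :=
    hFhat.eventually_const_le hFa
  have hXge : ∀ᶠ n in atTop, a ≤ X n ω := by
    have hlow : ∀ᶠ n in atTop, ∀ u ∈ Finset.Ico 1 a, X n ω ≠ u := by
      apply (Finset.Ico 1 a).eventually_all.mpr
      intro u hu
      rw [Finset.mem_Ico] at hu
      apply not_frequently.mp
      intro hfreq
      have huT : u ∈ T := by
        rw [hT, Finset.mem_filter, Finset.mem_Icc]
        exact ⟨⟨hu.1, by omega⟩, hfreq⟩
      have := T.min'_le u huT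
      omega
    filter_upwards [hlow, eventually_ge_atTop 1] with n h1 h2
    have h3 := hrange n h2
    rw [Set.mem_Icc] at h3
    by_contra hc
    exact h1 (X n ω) (by rw [Finset.mem_Ico]; omega) rfl
  obtain ⟨N, hN⟩ := eventually_atTop.mp
    ((eventually_ge_atTop 1).and (hFhatge.and hXge))
  obtain ⟨n, hnN, hXna⟩ := frequently_atTop.mp hafreq N
  obtain ⟨hn1, hfh, _⟩ := hN n hnN
  have hstep := (hrule n hn1 ω).2.2
  rw [hXna] at hstep
  have hXn1 : X (n+1) ω = a - 1 := by
    rw [hstep hfh]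
    omega
  have := (hN (n+1) (by omega)).2.2
  omega

lemma det_below {ω : Ω} (hm : 1 ≤ m)
    (hrule : intervalRule m p Δ₁ Δ₂ F U X)
    (hrange : ∀ n, 1 ≤ n → X n ω ∈ Set.Icc 1 m)
    (hustar : ustar ∈ Set.Icc 1 m)
    (hFdown : ∀ u, u ∈ Set.Icc 1 m → u < ustar → F u < p - Δ₁)
    (hconv : ∀ a, a ∈ Set.Icc 1 m → Tendsto (fun n => visits X a n ω) atTop atTop →
        Tendsto (fun n => Fhat F U X a n ω) atTop (𝓝 (F a))) :
    ¬ (∀ u, (∃ᶠ n in atTop, X n ω = u) → u < ustar) := by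
  intro H
  classical
  set T := (Finset.Icc 1 m).filter (fun u => ∃ᶠ n in atTop, X n ω = u) with hT
  have hTne : T.Nonempty := by
    obtain ⟨u, hu1, hu2⟩ := exists_frequent hm hrange
    exact ⟨u, by rw [hT, Finset.mem_filter]; exact ⟨hu1, hu2⟩⟩
  set a := T.max' hTne with ha
  have haT : a ∈ T := T.max'_mem hTne
  rw [hT, Finset.mem_filter, Finset.mem_Icc] at haT
  obtain ⟨⟨ha1, ha2⟩, hafreq⟩ := haT
  have haus : a < ustar := H a hafreq
  have hustm : ustar ≤ m := hustar.2
  have hFa : F a < p - Δ₁ := hFdown a (Set.mem_Icc.mpr ⟨ha1, ha2⟩) haus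
  have htv : Tendsto (fun n => visits X a n ω) atTop atTop :=
    (tendsto_visits_iff X a ω).mpr hafreq
  have hFhat := hconv a (Set.mem_Icc.mpr ⟨ha1, ha2⟩) htv
  have hFhatle : ∀ᶠ n in atTop, Fhat F U X a n ω ≤ p - Δ₁ :=
    hFhat.eventually_le_const hFa
  have hXle : ∀ᶠ n in atTop, X n ω ≤ a := by
    have hlow : ∀ᶠ n in atTop, ∀ u ∈ Finset.Ioc a m, X n ω ≠ u := by
      apply (Finset.Ioc a m).eventually_all.mpr
      intro u hu
      rw [Finset.mem_Ioc] at hu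
      apply not_frequently.mp
      intro hfreq
      have huT : u ∈ T := by
        rw [hT, Finset.mem_filter, Finset.mem_Icc]
        exact ⟨⟨by omega, hu.2⟩, hfreq⟩
      have := T.le_max' u huT
      omega
    filter_upwards [hlow, eventually_ge_atTop 1] with n h1 h2
    have h3 := hrange n h2
    rw [Set.mem_Icc] at h3
    by_contra hc
    exact h1 (X n ω) (by rw [Finset.mem_Ioc]; omega) rfl
  obtain ⟨N, hN⟩ := eventually_atTop.mp
    ((eventually_ge_atTop 1).and (hFhatle.and hXle))
  obtain ⟨n, hnN, hXna⟩ := frequently_atTop.mp hafreq N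
  obtain ⟨hn1, hfh, _⟩ := hN n hnN
  have hstep := (hrule n hn1 ω).2.1
  rw [hXna] at hstep
  have hXn1 : X (n+1) ω = a + 1 := by
    rw [hstep hfh]
    omega
  have := (hN (n+1) (by omega)).2.2
  omega

lemma det_freq_ustar {ω : Ω} (hm : 1 ≤ m)
    (hrule : intervalRule m p Δ₁ Δ₂ F U X)
    (hrange : ∀ n, 1 ≤ n → X n ω ∈ Set.Icc 1 m)
    (hab : ¬ (∀ u, (∃ᶠ n in atTop, X n ω = u) → ustar < u))
    (hbe : ¬ (∀ u, (∃ᶠ n in atTop, X n ω = u) → u < ustar)) :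
    ∃ᶠ n in atTop, X n ω = ustar := by
  push_neg at hab hbe
  obtain ⟨u, hufreq, huu⟩ := hab
  obtain ⟨v, hvfreq, hvv⟩ := hbe
  rcases Nat.eq_or_lt_of_le huu with h|h
  · rwa [h] at hufreq
  rcases Nat.eq_or_lt_of_le hvv with h'|h'
  · rwa [← h'] at hvfreq
  rw [frequently_atTop]
  intro N
  obtain ⟨n₁, hn₁N, hXn₁⟩ := frequently_atTop.mp hufreq (N + 1)
  obtain ⟨n₂, hn₂n₁, hXn₂⟩ := frequently_atTop.mp hvfreq n₁
  obtain ⟨k, hk1, hk2, hk3⟩ := walk_cross (f := fun j => X j ω) (c := ustar) hn₂n₁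
    (fun k hk1 _ => step_le hrule hrange k (by omega))
    (by show X n₁ ω ≤ ustar; rw [hXn₁]; omega)
    (by show ustar ≤ X n₂ ω; rw [hXn₂]; omega)
  exact ⟨k, by omega, hk3⟩

end Walk


section Meas

variable {Ω : Type*} [MeasurableSpace Ω] {m : ℕ} {F : ℕ → ℝ} {U : ℕ → Ω → ℝ} {X : ℕ → Ω → ℕ}
  {p Δ₁ Δ₂ : ℝ}

lemma comap_le_natFilt (hUmeas : ∀ i, Measurable (U i)) {i n : ℕ} (h1 : 1 ≤ i) (h2 : i ≤ n) :
    MeasurableSpace.comap (U i) inferInstance ≤ natFilt U hUmeas n := by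
  have : i ∈ Finset.Icc 1 n := Finset.mem_Icc.mpr ⟨h1, h2⟩
  exact le_iSup₂ (f := fun j (_ : j ∈ Finset.Icc 1 n) =>
    MeasurableSpace.comap (U j) inferInstance) i this

lemma measSet_U_le (hUmeas : ∀ i, Measurable (U i)) {i n : ℕ} (h1 : 1 ≤ i) (h2 : i ≤ n) (c : ℝ) :
    MeasurableSet[natFilt U hUmeas n] {ω | U i ω ≤ c} :=
  comap_le_natFilt hUmeas h1 h2 _ ⟨Set.Iic c, measurableSet_Iic, rfl⟩

lemma measResp (hUmeas : ∀ i, Measurable (U i)) {i n : ℕ} (h1 : 1 ≤ i) (h2 : i ≤ n)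
    (hXi : Measurable[natFilt U hUmeas n] (X i)) :
    Measurable[natFilt U hUmeas n] (resp F U X i) := by
  have hset : MeasurableSet[natFilt U hUmeas n] {ω | U i ω ≤ F (X i ω)} := by
    have he : {ω | U i ω ≤ F (X i ω)} = ⋃ v : ℕ, ({ω | X i ω = v} ∩ {ω | U i ω ≤ F v}) := by
      ext ω
      simp only [Set.mem_setOf_eq, Set.mem_iUnion, Set.mem_inter_iff]
      exact ⟨fun h => ⟨X i ω, rfl, h⟩, fun ⟨v, hv, h⟩ => by rw [hv]; exact h⟩
    rw [he]
    exact MeasurableSet.iUnion fun v =>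
      (hXi (measurableSet_singleton v)).inter (measSet_U_le hUmeas h1 h2 (F v))
  exact Measurable.ite hset measurable_const measurable_const

lemma measVisitsR (hUmeas : ∀ i, Measurable (U i)) {u j n : ℕ}
    (hXall : ∀ i, 1 ≤ i → i ≤ j → Measurable[natFilt U hUmeas n] (X i)) :
    Measurable[natFilt U hUmeas n] (fun ω => (visits X u j ω : ℝ)) := by
  have he : (fun ω => (visits X u j ω : ℝ))
      = fun ω => ∑ i ∈ Finset.Icc 1 j, if X i ω = u then (1:ℝ) else 0 := by
    funext ω
    rw [visits_eq_sum]
    push_cast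
    apply Finset.sum_congr rfl
    intro i _
    by_cases h : X i ω = u <;> simp [h]
  rw [he]
  apply Finset.measurable_sum
  intro i hi
  rw [Finset.mem_Icc] at hi
  exact Measurable.ite ((hXall i hi.1 (le_trans hi.2 le_rfl)) (measurableSet_singleton u))
    measurable_const measurable_const

lemma measFhat (hUmeas : ∀ i, Measurable (U i)) {v n : ℕ}
    (hXall : ∀ i, 1 ≤ i → i ≤ n → Measurable[natFilt U hUmeas n] (X i)) :
    Measurable[natFilt U hUmeas n] (fun ω => Fhat F U X v n ω) := by
  unfold Fhat
  apply Measurable.div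
  · apply Finset.measurable_sum
    intro i hi
    rw [Finset.mem_Icc] at hi
    exact Measurable.ite ((hXall i hi.1 hi.2) (measurableSet_singleton v))
      (measResp hUmeas hi.1 hi.2 (hXall i hi.1 hi.2)) measurable_const
  · exact measVisitsR hUmeas hXall

lemma measX (hUmeas : ∀ i, Measurable (U i)) (hm : 1 ≤ m)
    (hrule : intervalRule m p Δ₁ Δ₂ F U X)
    (hXrange : ∀ i, 1 ≤ i → ∀ ω, X i ω ∈ Set.Icc 1 m)
    (x₀ : ℕ) (hX1 : ∀ ω, X 1 ω = x₀) :
    ∀ n, Measurable[natFilt U hUmeas n] (X (n+1)) := by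
  intro n
  induction n using Nat.strong_induction_on with
  | _ n ih =>
    match n with
    | 0 =>
      have : X 1 = fun _ => x₀ := funext hX1
      rw [this]
      exact measurable_const
    | Nat.succ k =>
      have hXall : ∀ i, 1 ≤ i → i ≤ k+1 → Measurable[natFilt U hUmeas (k+1)] (X i) := by
        intro i h1 h2
        have h3 := ih (i-1) (by omega)
        have h4 : i - 1 + 1 = i := by omega
        rw [h4] at h3
        exact h3.mono ((natFilt U hUmeas).mono (by omega)) le_rfl
      set g : ℕ → ℝ → ℕ := fun v q =>
        if q ≤ p - Δ₁ then min (v+1) m else if p + Δ₂ ≤ q then max (v-1) 1 else v with hg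
      have hgpt : ∀ ω, X (k+2) ω = g (X (k+1) ω) (Fhat F U X (X (k+1) ω) (k+1) ω) := by
        intro ω
        obtain ⟨h1, h2, h3⟩ := hrule (k+1) (by omega) ω
        rw [hg]
        simp only
        rcases le_or_gt (Fhat F U X (X (k+1) ω) (k+1) ω) (p - Δ₁) with h|h
        · rw [if_pos h]
          exact h2 h
        rcases le_or_gt (p + Δ₂) (Fhat F U X (X (k+1) ω) (k+1) ω) with h'|h'
        · rw [if_neg (by linarith), if_pos h']
          exact h3 h'
        · rw [if_neg (by linarith), if_neg (by linarith)]
          exact h1 h h'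
      have hFh : Measurable[natFilt U hUmeas (k+1)]
          (fun ω => Fhat F U X (X (k+1) ω) (k+1) ω) := by
        have he : (fun ω => Fhat F U X (X (k+1) ω) (k+1) ω)
            = fun ω => ∑ v ∈ Finset.Icc 1 m,
                if X (k+1) ω = v then Fhat F U X v (k+1) ω else 0 := by
          funext ω
          rw [Finset.sum_ite_eq (Finset.Icc 1 m) (X (k+1) ω)
            (fun v => Fhat F U X v (k+1) ω)]
          rw [if_pos]
          rw [Finset.mem_Icc]
          exact Set.mem_Icc.mp (hXrange (k+1) (by omega) ω)
        rw [he]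
        apply Finset.measurable_sum
        intro v _
        exact Measurable.ite ((hXall (k+1) (by omega) le_rfl) (measurableSet_singleton v))
          (measFhat hUmeas hXall) measurable_const
      have hgm : ∀ v : ℕ, Measurable (g v) := by
        intro v
        apply Measurable.ite measurableSet_Iic measurable_const
        exact Measurable.ite (measurableSet_le measurable_const measurable_id)
          measurable_const measurable_const
      have : X (k+2) = fun ω => g (X (k+1) ω) (Fhat F U X (X (k+1) ω) (k+1) ω) := funext hgpt
      rw [this]
      refine @measurable_to_countable' ℕ Ω _ _ (natFilt U hUmeas (k+1)) _ (fun x => ?_)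
      have he : (fun ω => g (X (k+1) ω) (Fhat F U X (X (k+1) ω) (k+1) ω)) ⁻¹' {x}
          = ⋃ v : ℕ, ({ω | X (k+1) ω = v} ∩
              (fun ω => Fhat F U X (X (k+1) ω) (k+1) ω) ⁻¹' ((g v) ⁻¹' {x})) := by
        ext ω
        simp only [Set.mem_preimage, Set.mem_singleton_iff, Set.mem_iUnion,
          Set.mem_inter_iff, Set.mem_setOf_eq]
        constructor
        · intro h
          exact ⟨X (k+1) ω, rfl, h⟩
        · rintro ⟨v, hv, h⟩
          rw [hv] at h ⊢
          exact h
      rw [he]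
      exact MeasurableSet.iUnion fun v =>
        ((hXall (k+1) (by omega) le_rfl) (measurableSet_singleton v)).inter
          (hFh ((hgm v) (measurableSet_singleton x)))

end Meas


section Prob

variable {Ω : Type*} [MeasurableSpace Ω] {m : ℕ} {F : ℕ → ℝ} {U : ℕ → Ω → ℝ} {X : ℕ → Ω → ℕ}
  {p Δ₁ Δ₂ : ℝ}

/-- martingale increment -/
def Dfun (F : ℕ → ℝ) (U : ℕ → Ω → ℝ) (X : ℕ → Ω → ℕ) (a i : ℕ) (ω : Ω) : ℝ :=
  (if X i ω = a then (1:ℝ) else 0) * (resp F U X i ω - F a) * ((visits X a i ω : ℝ))⁻¹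

/-- the weighted martingale -/
def Wfun (F : ℕ → ℝ) (U : ℕ → Ω → ℝ) (X : ℕ → Ω → ℕ) (a n : ℕ) (ω : Ω) : ℝ :=
  ∑ i ∈ Finset.Icc 1 n, Dfun F U X a i ω

lemma abs_resp_sub_le {a i : ℕ} {ω : Ω} (h0 : 0 ≤ F a) (h1 : F a ≤ 1) :
    |resp F U X i ω - F a| ≤ 1 := by
  unfold resp
  by_cases h : U i ω ≤ F (X i ω) <;> simp [h] <;> rw [abs_le] <;> constructor <;> linarith

lemma abs_inv_visits_le {a i : ℕ} {ω : Ω} : |((visits X a i ω : ℝ))⁻¹| ≤ 1 := by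
  rcases Nat.eq_zero_or_pos (visits X a i ω) with h|h
  · simp [h]
  · rw [abs_of_nonneg (by positivity)]
    rw [inv_le_one_iff₀]
    right
    exact_mod_cast h

lemma abs_ind_le {a i : ℕ} {ω : Ω} : |(if X i ω = a then (1:ℝ) else 0)| ≤ 1 := by
  by_cases h : X i ω = a <;> simp [h]

lemma absD_le_one {a i : ℕ} {ω : Ω} (h0 : 0 ≤ F a) (h1 : F a ≤ 1) :
    |Dfun F U X a i ω| ≤ 1 := by
  unfold Dfun
  rw [abs_mul, abs_mul]
  calc |if X i ω = a then (1:ℝ) else 0| * |resp F U X i ω - F a| * |((visits X a i ω : ℝ))⁻¹|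
      ≤ 1 * 1 * 1 := by
        apply mul_le_mul _ abs_inv_visits_le (abs_nonneg _) (by norm_num)
        apply mul_le_mul abs_ind_le (abs_resp_sub_le h0 h1) (abs_nonneg _) (by norm_num)
  _ = 1 := by norm_num

lemma measD (hUmeas : ∀ i, Measurable (U i)) {a i n : ℕ} (h1 : 1 ≤ i) (h2 : i ≤ n)
    (hXall : ∀ j, 1 ≤ j → j ≤ i → Measurable[natFilt U hUmeas n] (X j)) :
    Measurable[natFilt U hUmeas n] (Dfun F U X a i) := by
  unfold Dfun
  apply Measurable.mul
  · apply Measurable.mul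
    · exact Measurable.ite ((hXall i h1 le_rfl) (measurableSet_singleton a))
        measurable_const measurable_const
    · exact (measResp hUmeas h1 h2 (hXall i h1 le_rfl)).sub measurable_const
  · exact (measVisitsR hUmeas hXall).inv

lemma measW (hUmeas : ∀ i, Measurable (U i)) {a n j : ℕ} (hjn : j ≤ n)
    (hXall : ∀ i, 1 ≤ i → i ≤ j → Measurable[natFilt U hUmeas n] (X i)) :
    Measurable[natFilt U hUmeas n] (Wfun F U X a j) := by
  unfold Wfun
  apply Finset.measurable_sum
  intro i hi
  rw [Finset.mem_Icc] at hi
  exact measD hUmeas hi.1 (le_trans hi.2 hjn) (fun l hl1 hl2 => hXall l hl1 (le_trans hl2 hi.2))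

lemma integrable_of_bound (P : Measure Ω) [IsProbabilityMeasure P] {f : Ω → ℝ}
    (hf : AEStronglyMeasurable f P) {C : ℝ} (h : ∀ ω, |f ω| ≤ C) : Integrable f P :=
  Integrable.mono' (integrable_const C) hf (ae_of_all _ fun ω => by
    simpa [Real.norm_eq_abs] using h ω)

/-- Key integral identity: increments at time `n+1` are orthogonal to bounded
`𝓕 n`-measurable functions. -/
lemma key_integral (P : Measure Ω) [IsProbabilityMeasure P]
    (hUmeas : ∀ i, Measurable (U i))
    (hUindep : iIndepFun U P)
    (hUdist : ∀ i, Measure.map (U i) P = volume.restrict (Set.Icc (0:ℝ) 1))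
    {a : ℕ} (hFa0 : 0 ≤ F a) (hFa1 : F a ≤ 1) {n : ℕ}
    (hXn : Measurable[natFilt U hUmeas n] (X (n+1)))
    {φ : Ω → ℝ} (hφ : Measurable[natFilt U hUmeas n] φ) {C : ℝ} (hφb : ∀ ω, |φ ω| ≤ C) :
    ∫ ω, φ ω * ((if X (n+1) ω = a then (1:ℝ) else 0) * (resp F U X (n+1) ω - F a)) ∂P = 0 := by
  classical
  set η : Ω → ℝ := fun ω => if U (n+1) ω ≤ F a then (1:ℝ) else 0 with hη
  set ψ : Ω → ℝ := fun ω => φ ω * (if X (n+1) ω = a then (1:ℝ) else 0) with hψ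
  set ζ : Ω → ℝ := fun ω => η ω - F a with hζ
  -- pointwise rewriting
  have hpt : ∀ ω, φ ω * ((if X (n+1) ω = a then (1:ℝ) else 0) * (resp F U X (n+1) ω - F a))
      = ψ ω * ζ ω := by
    intro ω
    rw [hψ, hζ, hη]
    simp only
    by_cases h : X (n+1) ω = a
    · rw [if_pos h]
      unfold resp
      rw [h]
      ring
    · rw [if_neg h]
      ring
  -- measurability
  have hψm : Measurable[natFilt U hUmeas n] ψ :=
    hφ.mul (Measurable.ite (hXn (measurableSet_singleton a)) measurable_const measurable_const)
  have hζm : Measurable[MeasurableSpace.comap (U (n+1)) inferInstance] ζ := by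
    apply Measurable.sub _ measurable_const
    exact Measurable.ite ⟨Set.Iic (F a), measurableSet_Iic, rfl⟩
      measurable_const measurable_const
  -- independence of σ-algebras
  have hii : iIndep (fun i => MeasurableSpace.comap (U i) inferInstance) P := hUindep.iIndep
  have hsig : Indep (natFilt U hUmeas n) (MeasurableSpace.comap (U (n+1)) inferInstance) P := by
    have hd : Disjoint (↑(Finset.Icc 1 n) : Set ℕ) ({n+1} : Set ℕ) := by
      rw [Set.disjoint_singleton_right, Finset.mem_coe, Finset.mem_Icc]
      omega
    have h2 := indep_iSup_of_disjoint (fun i => (hUmeas i).comap_le) hii hd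
    have e1 : (⨆ i ∈ (↑(Finset.Icc 1 n) : Set ℕ), MeasurableSpace.comap (U i)
        inferInstance) = natFilt U hUmeas n := by
      apply le_antisymm
      · exact iSup₂_le fun i hi => le_iSup₂ (f := fun j (_ : j ∈ Finset.Icc 1 n) =>
          MeasurableSpace.comap (U j) inferInstance) i (Finset.mem_coe.mp hi)
      · exact iSup₂_le fun i hi => le_iSup₂ (f := fun j (_ : j ∈ (↑(Finset.Icc 1 n) : Set ℕ)) =>
          MeasurableSpace.comap (U j) inferInstance) i (Finset.mem_coe.mpr hi)
    have e2 : (⨆ i ∈ ({n+1} : Set ℕ), MeasurableSpace.comap (U i) inferInstance)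
        = MeasurableSpace.comap (U (n+1)) inferInstance := by
      simp
    rw [e1, e2] at h2
    exact h2
  -- independence of the two functions
  have hIF : IndepFun ψ ζ P := by
    rw [indepFun_iff_measure_inter_preimage_eq_mul]
    intro s t hs ht
    exact ((Indep_iff _ _ _).mp hsig) _ _ (hψm hs) (hζm ht)
  -- expectations
  have hζint : ∫ ω, ζ ω ∂P = 0 := by
    have hηle : ∀ ω, |η ω| ≤ 1 := by
      intro ω
      rw [hη]
      by_cases h : U (n+1) ω ≤ F a <;> simp [h]
    have hηm : Measurable η := by
      apply Measurable.ite _ measurable_const measurable_const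
      exact (hUmeas (n+1)) measurableSet_Iic
    have hηint : Integrable η P := integrable_of_bound P hηm.aestronglyMeasurable hηle
    have hη_eq : ∫ ω, η ω ∂P = F a := by
      have he : η = Set.indicator (U (n+1) ⁻¹' Set.Iic (F a)) (fun _ => (1:ℝ)) := by
        funext ω
        rw [hη, Set.indicator_apply]
        simp [Set.mem_Iic]
      rw [he, integral_indicator_const _ ((hUmeas (n+1)) measurableSet_Iic)]
      have hmap : P (U (n+1) ⁻¹' Set.Iic (F a)) = ENNReal.ofReal (F a) := by
        rw [← Measure.map_apply (hUmeas (n+1)) measurableSet_Iic, hUdist,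
          Measure.restrict_apply measurableSet_Iic]
        have : Set.Iic (F a) ∩ Set.Icc (0:ℝ) 1 = Set.Icc 0 (F a) := by
          ext x
          simp only [Set.mem_inter_iff, Set.mem_Iic, Set.mem_Icc]
          constructor
          · rintro ⟨h1, h2, h3⟩
            exact ⟨h2, h1⟩
          · rintro ⟨h1, h2⟩
            exact ⟨h2, h1, le_trans h2 hFa1⟩
        rw [this, Real.volume_Icc]
        norm_num
      rw [measureReal_def, hmap]
      simp [ENNReal.toReal_ofReal hFa0]
    rw [hζ]
    rw [integral_sub hηint (integrable_const (F a))]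
    rw [hη_eq]
    simp
  have hint : ∫ ω, φ ω * ((if X (n+1) ω = a then (1:ℝ) else 0) * (resp F U X (n+1) ω - F a)) ∂P
      = ∫ ω, ψ ω * ζ ω ∂P := by
    apply integral_congr_ae
    exact ae_of_all _ hpt
  rw [hint]
  have := IndepFun.integral_fun_mul_eq_mul_integral hIF
    ((hψm.mono ((natFilt U hUmeas).le n) le_rfl).aestronglyMeasurable)
    ((hζm.mono ((hUmeas (n+1)).comap_le) le_rfl).aestronglyMeasurable)
  have heq : ∫ ω, ψ ω * ζ ω ∂P = (∫ ω, ψ ω ∂P) * ∫ ω, ζ ω ∂P := this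
  rw [heq, hζint, mul_zero]

lemma measXall (hUmeas : ∀ i, Measurable (U i)) (hm : 1 ≤ m)
    (hrule : intervalRule m p Δ₁ Δ₂ F U X)
    (hXrange : ∀ i, 1 ≤ i → ∀ ω, X i ω ∈ Set.Icc 1 m)
    (x₀ : ℕ) (hX1 : ∀ ω, X 1 ω = x₀) (n : ℕ) :
    ∀ i, 1 ≤ i → i ≤ n + 1 → Measurable[natFilt U hUmeas n] (X i) := by
  intro i h1 h2
  have h3 := measX hUmeas hm hrule hXrange x₀ hX1 (i-1)
  have h4 : i - 1 + 1 = i := by omega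
  rw [h4] at h3
  exact h3.mono ((natFilt U hUmeas).mono (by omega)) le_rfl

lemma martStep (P : Measure Ω) [IsProbabilityMeasure P]
    (hUmeas : ∀ i, Measurable (U i))
    (hUindep : iIndepFun U P)
    (hUdist : ∀ i, Measure.map (U i) P = volume.restrict (Set.Icc (0:ℝ) 1))
    (hm : 1 ≤ m) (hrule : intervalRule m p Δ₁ Δ₂ F U X)
    (hXrange : ∀ i, 1 ≤ i → ∀ ω, X i ω ∈ Set.Icc 1 m)
    (x₀ : ℕ) (hX1 : ∀ ω, X 1 ω = x₀)
    {a : ℕ} (hFa0 : 0 ≤ F a) (hFa1 : F a ≤ 1) (n : ℕ) {s : Set Ω}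
    (hs : MeasurableSet[natFilt U hUmeas n] s) :
    ∫ ω in s, Dfun F U X a (n+1) ω ∂P = 0 := by
  classical
  have hXall := measXall hUmeas hm hrule hXrange x₀ hX1 n
  have hXn : Measurable[natFilt U hUmeas n] (X (n+1)) := hXall (n+1) (by omega) le_rfl
  set φ : Ω → ℝ := fun ω =>
    Set.indicator s (fun _ => (1:ℝ)) ω * ((visits X a (n+1) ω : ℝ))⁻¹ with hφ
  have hφm : Measurable[natFilt U hUmeas n] φ :=
    (measurable_const.indicator hs).mul (measVisitsR hUmeas hXall).inv
  have hφb : ∀ ω, |φ ω| ≤ 1 := by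
    intro ω
    rw [hφ]
    simp only
    rw [abs_mul]
    have h1 : |Set.indicator s (fun _ => (1:ℝ)) ω| ≤ 1 := by
      rw [Set.indicator_apply]
      by_cases h : ω ∈ s <;> simp [h]
    calc |Set.indicator s (fun _ => (1:ℝ)) ω| * |((visits X a (n+1) ω : ℝ))⁻¹|
        ≤ 1 * 1 := mul_le_mul h1 abs_inv_visits_le (abs_nonneg _) (by norm_num)
    _ = 1 := by norm_num
  have hkey := key_integral P hUmeas hUindep hUdist hFa0 hFa1 hXn hφm hφb
  have hs' : MeasurableSet s := ((natFilt U hUmeas).le n) s hs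
  rw [← integral_indicator hs']
  rw [← hkey]
  apply integral_congr_ae
  apply ae_of_all
  intro ω
  rw [Set.indicator_apply]
  by_cases h : ω ∈ s
  · rw [if_pos h, hφ]
    simp only [Set.indicator_apply, if_pos h]
    unfold Dfun
    ring
  · rw [if_neg h, hφ]
    simp only [Set.indicator_apply, if_neg h]
    ring

lemma Wintegrable (P : Measure Ω) [IsProbabilityMeasure P]
    (hUmeas : ∀ i, Measurable (U i)) (hm : 1 ≤ m)
    (hrule : intervalRule m p Δ₁ Δ₂ F U X)
    (hXrange : ∀ i, 1 ≤ i → ∀ ω, X i ω ∈ Set.Icc 1 m)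
    (x₀ : ℕ) (hX1 : ∀ ω, X 1 ω = x₀)
    {a : ℕ} (hFa0 : 0 ≤ F a) (hFa1 : F a ≤ 1) (n : ℕ) :
    Integrable (Wfun F U X a n) P := by
  have hXall := measXall hUmeas hm hrule hXrange x₀ hX1 n
  apply integrable_of_bound P (C := n)
  · exact ((measW hUmeas le_rfl (fun i h1 h2 => hXall i h1 (by omega))).mono
      ((natFilt U hUmeas).le n) le_rfl).aestronglyMeasurable
  · intro ω
    unfold Wfun
    calc |∑ i ∈ Finset.Icc 1 n, Dfun F U X a i ω| ≤ ∑ i ∈ Finset.Icc 1 n, |Dfun F U X a i ω| :=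
      Finset.abs_sum_le_sum_abs _ _
    _ ≤ ∑ i ∈ Finset.Icc 1 n, 1 := Finset.sum_le_sum fun i _ => absD_le_one hFa0 hFa1
    _ = n := by simp

lemma Wmart (P : Measure Ω) [IsProbabilityMeasure P]
    (hUmeas : ∀ i, Measurable (U i))
    (hUindep : iIndepFun U P)
    (hUdist : ∀ i, Measure.map (U i) P = volume.restrict (Set.Icc (0:ℝ) 1))
    (hm : 1 ≤ m) (hrule : intervalRule m p Δ₁ Δ₂ F U X)
    (hXrange : ∀ i, 1 ≤ i → ∀ ω, X i ω ∈ Set.Icc 1 m)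
    (x₀ : ℕ) (hX1 : ∀ ω, X 1 ω = x₀)
    {a : ℕ} (hFa0 : 0 ≤ F a) (hFa1 : F a ≤ 1) :
    Martingale (Wfun F U X a) (natFilt U hUmeas) P := by
  apply martingale_nat
  · intro n
    exact (measW hUmeas le_rfl
      (fun i h1 h2 => measXall hUmeas hm hrule hXrange x₀ hX1 n i h1 (by omega))).stronglyMeasurable
  · intro n
    exact Wintegrable P hUmeas hm hrule hXrange x₀ hX1 hFa0 hFa1 n
  · intro n
    haveI : SigmaFinite (P.trim ((natFilt U hUmeas).le n)) := by infer_instance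
    apply ae_eq_condExp_of_forall_setIntegral_eq ((natFilt U hUmeas).le n)
      (Wintegrable P hUmeas hm hrule hXrange x₀ hX1 hFa0 hFa1 (n+1))
    · intro t ht hμt
      exact (Wintegrable P hUmeas hm hrule hXrange x₀ hX1 hFa0 hFa1 n).integrableOn
    · intro t ht hμt
      have hW1 : ∀ ω, Wfun F U X a (n+1) ω = Wfun F U X a n ω + Dfun F U X a (n+1) ω := by
        intro ω
        unfold Wfun
        rw [Finset.sum_Icc_succ_top (by omega : 1 ≤ n+1)]
      have hDi : Integrable (Dfun F U X a (n+1)) P := by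
        apply integrable_of_bound P (C := 1)
        · exact ((measD hUmeas (by omega) le_rfl
            (fun l h1 h2 => measXall hUmeas hm hrule hXrange x₀ hX1 (n+1) l h1 (by omega))).mono
            ((natFilt U hUmeas).le (n+1)) le_rfl).aestronglyMeasurable
        · exact fun ω => absD_le_one hFa0 hFa1
      calc ∫ ω in t, Wfun F U X a n ω ∂P
          = ∫ ω in t, Wfun F U X a n ω ∂P + ∫ ω in t, Dfun F U X a (n+1) ω ∂P := by
            rw [martStep P hUmeas hUindep hUdist hm hrule hXrange x₀ hX1 hFa0 hFa1 n ht,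
              add_zero]
      _ = ∫ ω in t, Wfun F U X a (n+1) ω ∂P := by
            rw [← integral_add
              ((Wintegrable P hUmeas hm hrule hXrange x₀ hX1 hFa0 hFa1 n).integrableOn)
              hDi.integrableOn]
            apply integral_congr_ae
            exact ae_of_all _ fun ω => (hW1 ω).symm
    · exact StronglyMeasurable.aestronglyMeasurable (Measurable.stronglyMeasurable (measW hUmeas le_rfl
        (fun i h1 h2 => measXall hUmeas hm hrule hXrange x₀ hX1 n i h1
          (by omega))))

lemma Dcross (P : Measure Ω) [IsProbabilityMeasure P]
    (hUmeas : ∀ i, Measurable (U i))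
    (hUindep : iIndepFun U P)
    (hUdist : ∀ i, Measure.map (U i) P = volume.restrict (Set.Icc (0:ℝ) 1))
    (hm : 1 ≤ m) (hrule : intervalRule m p Δ₁ Δ₂ F U X)
    (hXrange : ∀ i, 1 ≤ i → ∀ ω, X i ω ∈ Set.Icc 1 m)
    (x₀ : ℕ) (hX1 : ∀ ω, X 1 ω = x₀)
    {a : ℕ} (hFa0 : 0 ≤ F a) (hFa1 : F a ≤ 1) {i j : ℕ} (hi : 1 ≤ i) (hij : i < j) :
    ∫ ω, Dfun F U X a i ω * Dfun F U X a j ω ∂P = 0 := by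
  obtain ⟨k, rfl⟩ : ∃ k, j = k + 1 := ⟨j - 1, by omega⟩
  have hXall := measXall hUmeas hm hrule hXrange x₀ hX1 k
  set φ : Ω → ℝ := fun ω => Dfun F U X a i ω * ((visits X a (k+1) ω : ℝ))⁻¹ with hφ
  have hφm : Measurable[natFilt U hUmeas k] φ :=
    (measD hUmeas hi (by omega) (fun l h1 h2 => hXall l h1 (by omega))).mul
      (measVisitsR hUmeas hXall).inv
  have hφb : ∀ ω, |φ ω| ≤ 1 := by
    intro ω
    rw [hφ]
    simp only
    rw [abs_mul]
    calc |Dfun F U X a i ω| * |((visits X a (k+1) ω : ℝ))⁻¹| ≤ 1 * 1 :=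
      mul_le_mul (absD_le_one hFa0 hFa1) abs_inv_visits_le (abs_nonneg _) (by norm_num)
    _ = 1 := by norm_num
  have hkey := key_integral P hUmeas hUindep hUdist hFa0 hFa1
    (hXall (k+1) (by omega) le_rfl) hφm hφb
  rw [← hkey]
  apply integral_congr_ae
  apply ae_of_all
  intro ω
  rw [hφ]
  simp only
  conv_lhs => rw [show Dfun F U X a (k+1) ω = (if X (k+1) ω = a then (1:ℝ) else 0) *
    (resp F U X (k+1) ω - F a) * ((visits X a (k+1) ω : ℝ))⁻¹ from rfl]
  ring

lemma Wsq_le (P : Measure Ω) [IsProbabilityMeasure P]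
    (hUmeas : ∀ i, Measurable (U i))
    (hUindep : iIndepFun U P)
    (hUdist : ∀ i, Measure.map (U i) P = volume.restrict (Set.Icc (0:ℝ) 1))
    (hm : 1 ≤ m) (hrule : intervalRule m p Δ₁ Δ₂ F U X)
    (hXrange : ∀ i, 1 ≤ i → ∀ ω, X i ω ∈ Set.Icc 1 m)
    (x₀ : ℕ) (hX1 : ∀ ω, X 1 ω = x₀)
    {a : ℕ} (hFa0 : 0 ≤ F a) (hFa1 : F a ≤ 1) (n : ℕ) :
    ∫ ω, (Wfun F U X a n ω)^2 ∂P ≤ 2 := by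
  classical
  have hXall := measXall hUmeas hm hrule hXrange x₀ hX1 n
  have hDmeas : ∀ i, 1 ≤ i → i ≤ n → Measurable (Dfun F U X a i) := by
    intro i h1 h2
    exact (measD hUmeas h1 h2 (fun l hl1 hl2 => hXall l hl1 (by omega))).mono
      ((natFilt U hUmeas).le n) le_rfl
  have hDDint : ∀ i j, 1 ≤ i → i ≤ n → 1 ≤ j → j ≤ n →
      Integrable (fun ω => Dfun F U X a i ω * Dfun F U X a j ω) P := by
    intro i j h1 h2 h3 h4
    apply integrable_of_bound P (C := 1)
    · exact ((hDmeas i h1 h2).mul (hDmeas j h3 h4)).aestronglyMeasurable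
    · intro ω
      rw [abs_mul]
      calc |Dfun F U X a i ω| * |Dfun F U X a j ω| ≤ 1 * 1 :=
        mul_le_mul (absD_le_one hFa0 hFa1) (absD_le_one hFa0 hFa1) (abs_nonneg _) (by norm_num)
      _ = 1 := by norm_num
  have hexp : ∀ ω, (Wfun F U X a n ω)^2 = ∑ i ∈ Finset.Icc 1 n, ∑ j ∈ Finset.Icc 1 n,
      Dfun F U X a i ω * Dfun F U X a j ω := by
    intro ω
    unfold Wfun
    rw [sq, Finset.sum_mul_sum]
  have hint : ∫ ω, (Wfun F U X a n ω)^2 ∂P = ∑ i ∈ Finset.Icc 1 n, ∑ j ∈ Finset.Icc 1 n,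
      ∫ ω, Dfun F U X a i ω * Dfun F U X a j ω ∂P := by
    rw [integral_congr_ae (ae_of_all _ hexp)]
    rw [integral_finset_sum]
    · apply Finset.sum_congr rfl
      intro i hi
      rw [Finset.mem_Icc] at hi
      rw [integral_finset_sum]
      intro j hj
      rw [Finset.mem_Icc] at hj
      exact hDDint i j hi.1 hi.2 hj.1 hj.2
    · intro i hi
      rw [Finset.mem_Icc] at hi
      apply integrable_finset_sum
      intro j hj
      rw [Finset.mem_Icc] at hj
      exact hDDint i j hi.1 hi.2 hj.1 hj.2
  rw [hint]
  have hdiag : ∀ i ∈ Finset.Icc 1 n, ∑ j ∈ Finset.Icc 1 n,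
      ∫ ω, Dfun F U X a i ω * Dfun F U X a j ω ∂P
      = ∫ ω, Dfun F U X a i ω * Dfun F U X a i ω ∂P := by
    intro i hi
    rw [Finset.mem_Icc] at hi
    apply Finset.sum_eq_single i
    · intro j hj hji
      rw [Finset.mem_Icc] at hj
      rcases Nat.lt_or_ge i j with h|h
      · exact Dcross P hUmeas hUindep hUdist hm hrule hXrange x₀ hX1 hFa0 hFa1 hi.1 h
      · have hj' : j < i := by omega
        rw [integral_congr_ae (ae_of_all _ (fun ω => mul_comm _ _))]
        exact Dcross P hUmeas hUindep hUdist hm hrule hXrange x₀ hX1 hFa0 hFa1 hj.1 hj'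
    · intro h
      exact absurd (Finset.mem_Icc.mpr hi) h
  rw [Finset.sum_congr rfl hdiag]
  -- diagonal bound
  have hIb : ∀ i, 1 ≤ i → i ≤ n → ∀ ω, Dfun F U X a i ω * Dfun F U X a i ω ≤
      (if X i ω = a then (1:ℝ) else 0) * (((visits X a i ω : ℝ))⁻¹)^2 := by
    intro i h1 h2 ω
    unfold Dfun
    by_cases h : X i ω = a
    · rw [if_pos h]
      have h3 : (resp F U X i ω - F a) * (resp F U X i ω - F a) ≤ 1 := by
        have := abs_resp_sub_le (X := X) (U := U) (i := i) (ω := ω) hFa0 hFa1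
        nlinarith [abs_nonneg (resp F U X i ω - F a), sq_abs (resp F U X i ω - F a)]
      have h4 : (0:ℝ) ≤ (((visits X a i ω : ℝ))⁻¹)^2 := by positivity
      calc 1 * (resp F U X i ω - F a) * ((visits X a i ω : ℝ))⁻¹ *
          (1 * (resp F U X i ω - F a) * ((visits X a i ω : ℝ))⁻¹)
          = ((resp F U X i ω - F a) * (resp F U X i ω - F a)) *
            (((visits X a i ω : ℝ))⁻¹)^2 := by ring
      _ ≤ 1 * (((visits X a i ω : ℝ))⁻¹)^2 := by
          apply mul_le_mul_of_nonneg_right h3 h4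
    · rw [if_neg h]
      simp
  have hWeightInt : Integrable (fun ω => ∑ i ∈ Finset.Icc 1 n,
      (if X i ω = a then (1:ℝ) else 0) * (((visits X a i ω : ℝ))⁻¹)^2) P := by
    apply integrable_of_bound P (C := n)
    · apply Measurable.aestronglyMeasurable
      apply Finset.measurable_sum
      intro i hi
      rw [Finset.mem_Icc] at hi
      apply Measurable.mul
      · exact Measurable.ite ((hXall i hi.1 (by omega)).mono ((natFilt U hUmeas).le n) le_rfl
          (measurableSet_singleton a)) measurable_const measurable_const
      · exact (((measVisitsR (u := a) (j := i) hUmeas (fun l h1 h2 => hXall l h1 (by omega))).mono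
          ((natFilt U hUmeas).le n) le_rfl).inv).pow measurable_const
    · intro ω
      have hb : ∀ i ∈ Finset.Icc 1 n, (if X i ω = a then (1:ℝ) else 0) *
          (((visits X a i ω : ℝ))⁻¹)^2 ≤ 1 := by
        intro i _
        by_cases h : X i ω = a
        · rw [if_pos h, one_mul]
          have h2 : (((visits X a i ω : ℝ))⁻¹)^2 = |((visits X a i ω : ℝ))⁻¹|^2 :=
            (sq_abs _).symm
          rw [h2]
          calc |((visits X a i ω : ℝ))⁻¹|^2 ≤ 1^2 :=
            pow_le_pow_left₀ (abs_nonneg _) abs_inv_visits_le 2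
          _ = 1 := one_pow 2
        · rw [if_neg h, zero_mul]
          exact zero_le_one
      have hnn : ∀ i ∈ Finset.Icc 1 n, (0:ℝ) ≤ (if X i ω = a then (1:ℝ) else 0) *
          (((visits X a i ω : ℝ))⁻¹)^2 := by
        intro i _
        by_cases h : X i ω = a
        · rw [if_pos h, one_mul]
          positivity
        · rw [if_neg h, zero_mul]
      rw [abs_of_nonneg (Finset.sum_nonneg hnn)]
      calc ∑ i ∈ Finset.Icc 1 n, (if X i ω = a then (1:ℝ) else 0) * (((visits X a i ω : ℝ))⁻¹)^2
          ≤ ∑ i ∈ Finset.Icc 1 n, 1 := Finset.sum_le_sum hb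
      _ = n := by simp
  calc ∑ i ∈ Finset.Icc 1 n, ∫ ω, Dfun F U X a i ω * Dfun F U X a i ω ∂P
      = ∫ ω, ∑ i ∈ Finset.Icc 1 n, Dfun F U X a i ω * Dfun F U X a i ω ∂P := by
        rw [integral_finset_sum]
        intro i hi
        rw [Finset.mem_Icc] at hi
        exact hDDint i i hi.1 hi.2 hi.1 hi.2
  _ ≤ ∫ ω, ∑ i ∈ Finset.Icc 1 n,
      (if X i ω = a then (1:ℝ) else 0) * (((visits X a i ω : ℝ))⁻¹)^2 ∂P := by
        apply integral_mono _ hWeightInt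
        · intro ω
          apply Finset.sum_le_sum
          intro i hi
          rw [Finset.mem_Icc] at hi
          exact hIb i hi.1 hi.2 ω
        · apply integrable_finset_sum
          intro i hi
          rw [Finset.mem_Icc] at hi
          exact hDDint i i hi.1 hi.2 hi.1 hi.2
  _ ≤ ∫ _ω, (2:ℝ) ∂P := by
        apply integral_mono hWeightInt (integrable_const 2)
        intro ω
        exact sum_weight_le X a n ω
  _ = 2 := by simp

lemma Wconv (P : Measure Ω) [IsProbabilityMeasure P]
    (hUmeas : ∀ i, Measurable (U i))
    (hUindep : iIndepFun U P)
    (hUdist : ∀ i, Measure.map (U i) P = volume.restrict (Set.Icc (0:ℝ) 1))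
    (hm : 1 ≤ m) (hrule : intervalRule m p Δ₁ Δ₂ F U X)
    (hXrange : ∀ i, 1 ≤ i → ∀ ω, X i ω ∈ Set.Icc 1 m)
    (x₀ : ℕ) (hX1 : ∀ ω, X 1 ω = x₀)
    {a : ℕ} (hFa0 : 0 ≤ F a) (hFa1 : F a ≤ 1) :
    ∀ᵐ ω ∂P, ∃ c, Tendsto (fun n => Wfun F U X a n ω) atTop (𝓝 c) := by
  apply (Wmart P hUmeas hUindep hUdist hm hrule hXrange x₀ hX1
    hFa0 hFa1).submartingale.exists_ae_tendsto_of_bdd (R := 2)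
  intro n
  have hWint := Wintegrable P hUmeas hm hrule hXrange x₀ hX1 hFa0 hFa1 n
  have habs : ∫ ω, ‖Wfun F U X a n ω‖ ∂P ≤ 2 := by
    have hpt : ∀ ω, ‖Wfun F U X a n ω‖ ≤ (1 + (Wfun F U X a n ω)^2)/2 := by
      intro ω
      rw [Real.norm_eq_abs]
      nlinarith [sq_abs (Wfun F U X a n ω), abs_nonneg (Wfun F U X a n ω),
        sq_nonneg (|Wfun F U X a n ω| - 1)]
    have hsqint : Integrable (fun ω => (1 + (Wfun F U X a n ω)^2)/2) P := by
      apply Integrable.div_const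
      apply Integrable.add (integrable_const 1)
      have : (fun ω => (Wfun F U X a n ω)^2)
          = fun ω => Wfun F U X a n ω * Wfun F U X a n ω := by
        funext ω
        ring
      rw [this]
      apply integrable_of_bound P (C := (n:ℝ)*n)
      · exact (hWint.aestronglyMeasurable.mul hWint.aestronglyMeasurable)
      · intro ω
        rw [abs_mul]
        have hWb : |Wfun F U X a n ω| ≤ n := by
          unfold Wfun
          calc |∑ i ∈ Finset.Icc 1 n, Dfun F U X a i ω|
              ≤ ∑ i ∈ Finset.Icc 1 n, |Dfun F U X a i ω| := Finset.abs_sum_le_sum_abs _ _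
          _ ≤ ∑ i ∈ Finset.Icc 1 n, 1 := Finset.sum_le_sum fun i _ => absD_le_one hFa0 hFa1
          _ = n := by simp
        exact mul_le_mul hWb hWb (abs_nonneg _) (Nat.cast_nonneg n)
    calc ∫ ω, ‖Wfun F U X a n ω‖ ∂P ≤ ∫ ω, (1 + (Wfun F U X a n ω)^2)/2 ∂P :=
      integral_mono hWint.norm hsqint hpt
    _ = (∫ ω, (1 + (Wfun F U X a n ω)^2) ∂P)/2 := by rw [integral_div]
    _ = (1 + ∫ ω, (Wfun F U X a n ω)^2 ∂P)/2 := by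
        rw [integral_add (integrable_const 1) (by
          have : (fun ω => (Wfun F U X a n ω)^2)
              = fun ω => Wfun F U X a n ω * Wfun F U X a n ω := by
            funext ω; ring
          rw [this]
          apply integrable_of_bound P (C := (n:ℝ)*n)
          · exact (hWint.aestronglyMeasurable.mul hWint.aestronglyMeasurable)
          · intro ω
            rw [abs_mul]
            have hWb : |Wfun F U X a n ω| ≤ n := by
              unfold Wfun
              calc |∑ i ∈ Finset.Icc 1 n, Dfun F U X a i ω|
                  ≤ ∑ i ∈ Finset.Icc 1 n, |Dfun F U X a i ω| := Finset.abs_sum_le_sum_abs _ _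
              _ ≤ ∑ i ∈ Finset.Icc 1 n, 1 :=
                  Finset.sum_le_sum fun i _ => absD_le_one hFa0 hFa1
              _ = n := by simp
            exact mul_le_mul hWb hWb (abs_nonneg _) (Nat.cast_nonneg n))]
        simp
    _ ≤ (1 + 2)/2 := by
        have := Wsq_le P hUmeas hUindep hUdist hm hrule hXrange x₀ hX1 hFa0 hFa1 n
        linarith
    _ ≤ 2 := by norm_num
  rw [eLpNorm_one_eq_lintegral_enorm,
    ← ofReal_integral_norm_eq_lintegral_enorm hWint]
  calc ENNReal.ofReal (∫ ω, ‖Wfun F U X a n ω‖ ∂P) ≤ ENNReal.ofReal 2 :=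
    ENNReal.ofReal_le_ofReal habs
  _ = ((2:ℝ≥0) : ℝ≥0∞) := by norm_num

end Prob

section Pointwise

variable {Ω : Type*} {F : ℕ → ℝ} {U : ℕ → Ω → ℝ} {X : ℕ → Ω → ℕ}

lemma visits_cast (X : ℕ → Ω → ℕ) (u j : ℕ) (ω : Ω) :
    (visits X u j ω : ℝ) = ∑ i ∈ Finset.Icc 1 j, if X i ω = u then (1:ℝ) else 0 := by
  rw [visits_eq_sum]
  push_cast
  apply Finset.sum_congr rfl
  intro i _
  by_cases h : X i ω = u <;> simp [h]

lemma num_eq (F : ℕ → ℝ) (U : ℕ → Ω → ℝ) (X : ℕ → Ω → ℕ) (a n : ℕ) (ω : Ω) :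
    ∑ i ∈ Finset.Icc 1 n, (if X i ω = a then resp F U X i ω else 0)
      = Mart F U X a n ω + F a * (visits X a n ω : ℝ) := by
  rw [Mart, visits_cast, Finset.mul_sum, ← Finset.sum_add_distrib]
  apply Finset.sum_congr rfl
  intro i _
  by_cases h : X i ω = a
  · simp only [if_pos h]
    ring
  · simp only [if_neg h]
    ring

lemma pointwise_conv {a : ℕ} {ω : Ω} {c : ℝ}
    (hv : Tendsto (fun n => visits X a n ω) atTop atTop)
    (hW : Tendsto (fun n => Wfun F U X a n ω) atTop (𝓝 c)) :
    Tendsto (fun n => Fhat F U X a n ω) atTop (𝓝 (F a)) := by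
  classical
  have hex : ∀ k, ∃ n, k ≤ visits X a n ω := fun k => (tendsto_atTop.mp hv k).exists
  set σ : ℕ → ℕ := fun k => Nat.find (hex k) with hσdef
  have hspec : ∀ k, k ≤ visits X a (σ k) ω := fun k => Nat.find_spec (hex k)
  have hvσ : ∀ k, visits X a (σ k) ω = k := by
    intro k
    rcases Nat.eq_zero_or_pos (σ k) with h|h
    · have h2 := hspec k
      rw [h] at h2 ⊢
      rw [visits_zero] at h2 ⊢
      omega
    · obtain ⟨t, ht⟩ : ∃ t, σ k = t + 1 := ⟨σ k - 1, by omega⟩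
      have hmin : ¬ k ≤ visits X a t ω := by
        have := Nat.find_min (hex k) (show t < σ k by omega)
        exact this
      have hstep : visits X a (t+1) ω ≤ visits X a t ω + 1 := by
        have h2 := visits_succ X a t ω
        by_cases hx : X (t+1) ω = a
        · rw [if_pos hx] at h2
          omega
        · rw [if_neg hx] at h2
          omega
      have h2 := hspec k
      rw [ht] at h2 ⊢
      omega
  have hσmono : StrictMono σ := by
    apply strictMono_nat_of_lt_succ
    intro k
    by_contra hle
    push_neg at hle
    have h1 : visits X a (σ (k+1)) ω ≤ visits X a (σ k) ω := visits_mono X a ω hle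
    rw [hvσ, hvσ] at h1
    omega
  set z : ℕ → ℝ := fun j => resp F U X (σ j) ω - F a with hz
  have hC : ∀ n, (Mart F U X a n ω = ∑ j ∈ Finset.Icc 1 (visits X a n ω), z j) ∧
      (Wfun F U X a n ω = ∑ j ∈ Finset.Icc 1 (visits X a n ω), z j / (j:ℝ)) := by
    intro n
    induction n with
    | zero =>
      rw [visits_zero]
      constructor
      · rw [Mart]
        simp
      · rw [Wfun]
        simp
    | succ n ih =>
      have hM1 : Mart F U X a (n+1) ω = Mart F U X a n ω +
          (if X (n+1) ω = a then (1:ℝ) else 0) * (resp F U X (n+1) ω - F a) := by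
        rw [Mart, Mart, Finset.sum_Icc_succ_top (by omega : 1 ≤ n+1)]
      have hW1 : Wfun F U X a (n+1) ω = Wfun F U X a n ω + Dfun F U X a (n+1) ω := by
        rw [Wfun, Wfun, Finset.sum_Icc_succ_top (by omega : 1 ≤ n+1)]
      by_cases hx : X (n+1) ω = a
      · have hv1 : visits X a (n+1) ω = visits X a n ω + 1 := by
          rw [visits_succ, if_pos hx]
        have hσeq : σ (visits X a n ω + 1) = n + 1 := by
          apply le_antisymm
          · apply Nat.find_le
            rw [hv1]
          · by_contra hle
            push_neg at hle
            have h2 := hspec (visits X a n ω + 1)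
            rw [hvσ] at h2
            have h3 : visits X a (σ (visits X a n ω + 1)) ω ≤ visits X a n ω :=
              visits_mono X a ω (by omega)
            rw [hvσ] at h3
            omega
        have hzeq : z (visits X a n ω + 1) = resp F U X (n+1) ω - F a := by
          rw [hz]
          simp only
          rw [hσeq]
        constructor
        · rw [hM1, ih.1, hv1, Finset.sum_Icc_succ_top (by omega : 1 ≤ visits X a n ω + 1),
            hzeq, if_pos hx]
          ring
        · rw [hW1, ih.2, hv1, Finset.sum_Icc_succ_top (by omega : 1 ≤ visits X a n ω + 1),
            hzeq]
          unfold Dfun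
          rw [if_pos hx, hv1]
          push_cast
          ring
      · have hv1 : visits X a (n+1) ω = visits X a n ω := by
          rw [visits_succ, if_neg hx, add_zero]
        constructor
        · rw [hM1, ih.1, hv1, if_neg hx]
          ring
        · rw [hW1, ih.2, hv1]
          unfold Dfun
          rw [if_neg hx]
          ring
  have hsW : ∀ k, (∑ j ∈ Finset.Icc 1 k, z j / (j:ℝ)) = Wfun F U X a (σ k) ω := by
    intro k
    rw [(hC (σ k)).2, hvσ]
  have hst : Tendsto (fun k => ∑ j ∈ Finset.Icc 1 k, z j / (j:ℝ)) atTop (𝓝 c) := by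
    have h1 : Tendsto (fun k => Wfun F U X a (σ k) ω) atTop (𝓝 c) :=
      hW.comp hσmono.tendsto_atTop
    exact h1.congr fun k => (hsW k).symm
  have hkr := kronecker hst
  have hM : Tendsto (fun n => Mart F U X a n ω / (visits X a n ω : ℝ)) atTop (𝓝 0) := by
    have h1 := hkr.comp hv
    apply h1.congr
    intro n
    simp only [Function.comp]
    rw [(hC n).1]
  have hv1 : ∀ᶠ n in atTop, 1 ≤ visits X a n ω := hv.eventually_ge_atTop 1
  have hfin : Tendsto (fun n => Mart F U X a n ω / (visits X a n ω : ℝ) + F a)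
      atTop (𝓝 (F a)) := by
    have := hM.add (tendsto_const_nhds (x := F a))
    simpa using this
  apply hfin.congr'
  filter_upwards [hv1] with n hn
  have hne : ((visits X a n ω : ℕ) : ℝ) ≠ 0 := by
    have : (1:ℝ) ≤ ((visits X a n ω : ℕ) : ℝ) := by exact_mod_cast hn
    linarith
  rw [Fhat, num_eq, add_div, mul_div_assoc, div_self hne, mul_one]

end Pointwise

lemma prob_core {Ω : Type*} [MeasurableSpace Ω] (P : Measure Ω) [IsProbabilityMeasure P]
    {m : ℕ} {F : ℕ → ℝ} {U : ℕ → Ω → ℝ} {X : ℕ → Ω → ℕ} {p Δ₁ Δ₂ : ℝ}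
    (hUmeas : ∀ i, Measurable (U i))
    (hUindep : iIndepFun U P)
    (hUdist : ∀ i, Measure.map (U i) P = volume.restrict (Set.Icc (0:ℝ) 1))
    (hm : 1 ≤ m) (hrule : intervalRule m p Δ₁ Δ₂ F U X)
    (hXrange : ∀ i, 1 ≤ i → ∀ ω, X i ω ∈ Set.Icc 1 m)
    (x₀ : ℕ) (hX1 : ∀ ω, X 1 ω = x₀)
    (hF01 : ∀ v ∈ Set.Icc 1 m, F v ∈ Set.Icc (0:ℝ) 1)
    {a : ℕ} (ha : a ∈ Set.Icc 1 m) :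
    ∀ᵐ ω ∂P, Tendsto (fun n => visits X a n ω) atTop atTop →
      Tendsto (fun n => Fhat F U X a n ω) atTop (𝓝 (F a)) := by
  have hFa0 : 0 ≤ F a := (hF01 a ha).1
  have hFa1 : F a ≤ 1 := (hF01 a ha).2
  filter_upwards [Wconv P hUmeas hUindep hUdist hm hrule hXrange x₀ hX1 hFa0 hFa1] with ω hω hv
  obtain ⟨c, hc⟩ := hω
  exact pointwise_conv hv hc

end IDAux

/-- **key step in the proof of Theorem 1(i).** Under the conditions of
Theorem 1(i), almost surely the MTD `u*` is visited infinitely often, i.e. `n_{u*}(n) → ∞`;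
equivalently, the event that all levels visited infinitely often lie strictly above `u*`,
and the event that they all lie strictly below `u*`, each have probability zero. -/
theorem interval_design_MTD_visited_infinitely_often
    {Ω : Type*} [MeasurableSpace Ω] (P : Measure Ω) [IsProbabilityMeasure P]
    (m : ℕ) (hm : 1 ≤ m)
    (F : ℕ → ℝ) (hFmono : StrictMonoOn F (Set.Icc 1 m))
    (hF01 : ∀ v ∈ Set.Icc 1 m, F v ∈ Set.Icc (0:ℝ) 1)
    (U : ℕ → Ω → ℝ) (hUmeas : ∀ i, Measurable (U i))
    (hUindep : iIndepFun U P)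
    (hUdist : ∀ i, Measure.map (U i) P = volume.restrict (Set.Icc (0:ℝ) 1))
    (X : ℕ → Ω → ℕ) (hXmeas : ∀ i, Measurable (X i))
    (hXrange : ∀ i, 1 ≤ i → ∀ ω, X i ω ∈ Set.Icc 1 m)
    (x₀ : ℕ) (hx₀ : x₀ ∈ Set.Icc 1 m) (hX1 : ∀ ω, X 1 ω = x₀)
    (p Δ₁ Δ₂ : ℝ) (hp : p ∈ Set.Ioo (0:ℝ) 1) (hΔ₁ : 0 < Δ₁) (hΔ₂ : 0 < Δ₂)
    (hrule : intervalRule m p Δ₁ Δ₂ F U X)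
    (ustar : ℕ) (hustar : ustar ∈ Set.Icc 1 m)
    (hMTD : ∀ u ∈ Set.Icc 1 m, |F ustar - p| ≤ |F u - p|)
    (hin : F ustar ∈ Set.Ioo (p - Δ₁) (p + Δ₂))
    (huniq : ∀ u ∈ Set.Icc 1 m, F u ∈ Set.Icc (p - Δ₁) (p + Δ₂) → u = ustar) :
    (∀ᵐ ω ∂P, Tendsto (fun n => visits X ustar n ω) atTop atTop) ∧
    P {ω | ∀ u, (∃ᶠ n in atTop, X n ω = u) → ustar < u} = 0 ∧
    P {ω | ∀ u, (∃ᶠ n in atTop, X n ω = u) → u < ustar} = 0 := by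
  classical
  obtain ⟨hin1, hin2⟩ := hin
  -- F-value trichotomy
  have hFup : ∀ u, u ∈ Set.Icc 1 m → ustar < u → p + Δ₂ < F u := by
    intro u hu hlt
    have h1 : F ustar < F u := hFmono hustar hu hlt
    by_contra hc
    push_neg at hc
    exact absurd (huniq u hu (Set.mem_Icc.mpr ⟨by linarith, hc⟩)) (by omega)
  have hFdown : ∀ u, u ∈ Set.Icc 1 m → u < ustar → F u < p - Δ₁ := by
    intro u hu hlt
    have h1 : F u < F ustar := hFmono hu hustar hlt
    by_contra hc
    push_neg at hc
    exact absurd (huniq u hu (Set.mem_Icc.mpr ⟨hc, by linarith⟩)) (by omega)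
  -- the a.e. convergence property
  set C : Ω → Prop := fun ω => ∀ a, a ∈ Set.Icc 1 m →
    Tendsto (fun n => visits X a n ω) atTop atTop →
    Tendsto (fun n => Fhat F U X a n ω) atTop (𝓝 (F a)) with hC
  have hAE : ∀ᵐ ω ∂P, C ω := by
    rw [hC]
    rw [MeasureTheory.ae_all_iff]
    intro a
    by_cases ha : a ∈ Set.Icc 1 m
    · filter_upwards [IDAux.prob_core P hUmeas hUindep hUdist hm hrule hXrange x₀ hX1
        hF01 ha] with ω h _
      exact h
    · exact MeasureTheory.ae_of_all _ fun ω hmem => absurd hmem ha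
  have hnull : P {ω | ¬ C ω} = 0 := by
    rw [← MeasureTheory.ae_iff]
    exact hAE
  refine ⟨?_, ?_, ?_⟩
  · filter_upwards [hAE] with ω hCω
    have h1 := IDAux.det_above hm hrule (fun n hn => hXrange n hn ω) hustar hFup hCω
    have h2 := IDAux.det_below hm hrule (fun n hn => hXrange n hn ω) hustar hFdown hCω
    have h3 := IDAux.det_freq_ustar hm hrule (fun n hn => hXrange n hn ω) h1 h2
    exact (IDAux.tendsto_visits_iff X ustar ω).mpr h3
  · apply measure_mono_null _ hnull
    intro ω hω
    simp only [Set.mem_setOf_eq] at hω ⊢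
    intro hCω
    exact IDAux.det_above hm hrule (fun n hn => hXrange n hn ω) hustar hFup hCω hω
  · apply measure_mono_null _ hnull
    intro ω hω
    simp only [Set.mem_setOf_eq] at hω ⊢
    intro hCω
    exact IDAux.det_below hm hrule (fun n hn => hXrange n hn ω) hustar hFdown hCω hω
end
end

section
/- (Corollary 1(i), asymptotic oscillation.) Consider the interval design with target p ∈ (0,1) and margins Δp₁, Δp₂ > 0. Suppose no level u has F(u) ∈ [p−Δp₁, p+Δp₂], but there exists u₀ ∈ {1,…,m−1} with F(u₀) < p−Δp₁ and F(u₀+1) > p+Δp₂ (this holds whenever p ∈ [F(1), F(m)] and no level lies in the interval). Then almost surely the set of levels visited infinitely often is exactly {u₀, u₀+1}: the design eventually oscillates between the two doses whose F values straddle the target interval. -/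
open MeasureTheory ProbabilityTheory Filter Topology

noncomputable section

/-! ### Auxiliary definitions -/

/-- The predictable weight `1{X_i = u} / n_u(i)`. -/
def wgt {Ω : Type*} (X : ℕ → Ω → ℕ) (u i : ℕ) (ω : Ω) : ℝ :=
  (if X i ω = u then (1:ℝ) else 0) / (visits X u i ω : ℝ)

/-- The centered response `1{U_i ≤ F u} − F u`. -/
def dev {Ω : Type*} (F : ℕ → ℝ) (U : ℕ → Ω → ℝ) (u i : ℕ) (ω : Ω) : ℝ :=
  (if U i ω ≤ F u then (1:ℝ) else 0) - F u

/-- The weighted martingale `Z_n = ∑_{i≤n} 1{X_i = u}(Y_i − F u)/n_u(i)`. -/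
def ZZ {Ω : Type*} (F : ℕ → ℝ) (U : ℕ → Ω → ℝ) (X : ℕ → Ω → ℕ) (u n : ℕ) (ω : Ω) : ℝ :=
  ∑ i ∈ Finset.Icc 1 n, wgt X u i ω * dev F U u i ω

section PW

variable {Ω : Type*} {F : ℕ → ℝ} {U : ℕ → Ω → ℝ} {X : ℕ → Ω → ℕ} {u i n : ℕ} {ω : Ω}

lemma visits_eq_sum : visits X u n ω = ∑ i ∈ Finset.Icc 1 n, if X i ω = u then 1 else 0 := by
  rw [visits, Finset.card_filter]

lemma visits_succ : visits X u (n+1) ω = visits X u n ω + if X (n+1) ω = u then 1 else 0 := by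
  rw [visits_eq_sum, visits_eq_sum, Finset.sum_Icc_succ_top (Nat.succ_le_succ (Nat.zero_le n))]

lemma visits_mono : Monotone fun n => visits X u n ω := by
  intro a b hab
  exact Finset.card_le_card (Finset.filter_subset_filter _ (Finset.Icc_subset_Icc_right hab))

lemma visits_pos (h1 : 1 ≤ n) (h : X n ω = u) : 1 ≤ visits X u n ω := by
  refine Nat.one_le_iff_ne_zero.2 (fun h0 => ?_)
  rw [visits, Finset.card_eq_zero] at h0
  have : n ∈ (Finset.Icc 1 n).filter fun i => X i ω = u := by
    simp [Finset.mem_filter, Finset.mem_Icc, h1, h]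
  rw [h0] at this
  exact absurd this (Finset.notMem_empty n)

lemma visits_le : visits X u n ω ≤ n := by
  refine (Finset.card_filter_le _ _).trans ?_
  simp [Nat.card_Icc]

lemma visits_lt {j : ℕ} (hnj : n < j) (h : X j ω = u) : visits X u n ω < visits X u j ω := by
  have hsub : insert j ((Finset.Icc 1 n).filter fun i => X i ω = u)
      ⊆ (Finset.Icc 1 j).filter fun i => X i ω = u := by
    intro a ha
    rcases Finset.mem_insert.1 ha with rfl | ha
    · simp only [Finset.mem_filter, Finset.mem_Icc]
      exact ⟨⟨by omega, le_rfl⟩, h⟩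
    · simp only [Finset.mem_filter, Finset.mem_Icc] at ha ⊢
      exact ⟨⟨ha.1.1, ha.1.2.trans (by omega)⟩, ha.2⟩
  have hnotmem : j ∉ (Finset.Icc 1 n).filter fun i => X i ω = u := by
    simp only [Finset.mem_filter, Finset.mem_Icc]
    omega
  have := Finset.card_le_card hsub
  rw [Finset.card_insert_of_notMem hnotmem] at this
  exact Nat.lt_of_succ_le this

lemma mart_succ :
    Mart F U X u (n+1) ω = Mart F U X u n ω
      + (visits X u (n+1) ω : ℝ) * (ZZ F U X u (n+1) ω - ZZ F U X u n ω) := by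
  have hM : Mart F U X u (n+1) ω = Mart F U X u n ω
      + (if X (n+1) ω = u then (1:ℝ) else 0) * (resp F U X (n+1) ω - F u) :=
    Finset.sum_Icc_succ_top (Nat.succ_le_succ (Nat.zero_le n)) _
  have hZ : ZZ F U X u (n+1) ω = ZZ F U X u n ω + wgt X u (n+1) ω * dev F U u (n+1) ω :=
    Finset.sum_Icc_succ_top (Nat.succ_le_succ (Nat.zero_le n)) _
  rw [hM, hZ]
  by_cases h : X (n+1) ω = u
  · have hb : (1:ℝ) ≤ (visits X u (n+1) ω : ℝ) := by
      exact_mod_cast visits_pos (Nat.succ_le_succ (Nat.zero_le n)) h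
    have hb0 : (visits X u (n+1) ω : ℝ) ≠ 0 := by linarith
    simp only [wgt, dev, resp, h, if_true]
    field_simp
    ring
  · simp [wgt, dev, resp, h]

lemma fhat_eq (h : 1 ≤ visits X u n ω) :
    Fhat F U X u n ω = Mart F U X u n ω / (visits X u n ω : ℝ) + F u := by
  have hb : (1:ℝ) ≤ (visits X u n ω : ℝ) := by exact_mod_cast h
  have hb0 : (visits X u n ω : ℝ) ≠ 0 := by linarith
  have hcast : ((visits X u n ω : ℕ) : ℝ)
      = ∑ i ∈ Finset.Icc 1 n, (if X i ω = u then (1:ℝ) else 0) := by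
    rw [visits_eq_sum]
    push_cast [apply_ite (Nat.cast : ℕ → ℝ)]
    rfl
  have hnum : Mart F U X u n ω
      = (∑ i ∈ Finset.Icc 1 n, if X i ω = u then resp F U X i ω else 0)
        - (visits X u n ω : ℝ) * F u := by
    rw [Mart, hcast, Finset.sum_mul, ← Finset.sum_sub_distrib]
    refine Finset.sum_congr rfl fun i _ => ?_
    by_cases h : X i ω = u <;> simp [h] <;> ring
  rw [Fhat, hnum]
  field_simp
  ring

lemma wgt_abs_le : |wgt X u i ω| ≤ 1 := by
  by_cases h : X i ω = u
  · rcases Nat.eq_zero_or_pos (visits X u i ω) with h0 | h0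
    · simp [wgt, h, h0]
    · have h1 : (1:ℝ) ≤ (visits X u i ω : ℝ) := by exact_mod_cast h0
      rw [wgt, if_pos h, abs_div, abs_one, abs_of_nonneg (by positivity)]
      rw [div_le_one (by linarith)]
      exact h1
  · simp [wgt, h]

lemma dev_abs_le (h : F u ∈ Set.Icc (0:ℝ) 1) : |dev F U u i ω| ≤ 1 := by
  obtain ⟨h0, h1⟩ := h
  rw [dev, abs_le]
  by_cases hc : U i ω ≤ F u <;> simp [hc] <;> constructor <;> linarith

lemma sum_inv_sq_le : ∀ n : ℕ, ∑ k ∈ Finset.Icc 1 n, (1:ℝ) / (k:ℝ)^2 ≤ 2 := by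
  have key : ∀ n : ℕ, 1 ≤ n → ∑ k ∈ Finset.Icc 1 n, (1:ℝ) / (k:ℝ)^2 ≤ 2 - 1/(n:ℝ) := by
    intro n hn
    induction n, hn using Nat.le_induction with
    | base => norm_num
    | succ n hn ih =>
      rw [Finset.sum_Icc_succ_top (by omega : 1 ≤ n + 1)]
      have hn' : (1:ℝ) ≤ (n:ℝ) := by exact_mod_cast hn
      have h1 : ((n+1:ℕ):ℝ) = (n:ℝ) + 1 := by push_cast; ring
      rw [h1]
      have hkey : (1:ℝ)/((n:ℝ)+1)^2 ≤ 1/(n:ℝ) - 1/((n:ℝ)+1) := by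
        rw [div_sub_div _ _ (by linarith) (by linarith)]
        rw [div_le_div_iff₀ (by positivity) (by positivity)]
        ring_nf
        nlinarith
      linarith
  intro n
  rcases Nat.eq_zero_or_pos n with rfl | hn
  · simp
  · have h0 : (0:ℝ) < (n:ℝ) := by exact_mod_cast hn
    have := key n hn
    have : (0:ℝ) ≤ 1/(n:ℝ) := by positivity
    linarith [key n hn]

set_option maxHeartbeats 1000000 in
lemma sumsq_le (h : F u ∈ Set.Icc (0:ℝ) 1) :
    ∑ i ∈ Finset.Icc 1 n, (wgt X u i ω * dev F U u i ω)^2 ≤ 2 := by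
  classical
  have step1 : ∀ i ∈ Finset.Icc 1 n, (wgt X u i ω * dev F U u i ω)^2
      ≤ (if X i ω = u then (1:ℝ)/((visits X u i ω : ℝ))^2 else 0) := by
    intro i hi
    by_cases hx : X i ω = u
    · rw [if_pos hx, mul_pow]
      have hd : (dev F U u i ω)^2 ≤ 1 := by
        have h1 : |dev F U u i ω| ≤ 1 := dev_abs_le h
        nlinarith [sq_abs (dev F U u i ω), abs_nonneg (dev F U u i ω)]
      have hw : (wgt X u i ω)^2 = 1/((visits X u i ω : ℝ))^2 := by
        rw [wgt, if_pos hx, div_pow, one_pow]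
      rw [← hw]
      nlinarith [sq_nonneg (wgt X u i ω)]
    · simp [wgt, hx]
  have hinj : ∀ a ∈ (Finset.Icc 1 n).filter (fun i => X i ω = u),
      ∀ b ∈ (Finset.Icc 1 n).filter (fun i => X i ω = u),
      visits X u a ω = visits X u b ω → a = b := by
    intro a ha b hb hab
    simp only [Finset.mem_filter, Finset.mem_Icc] at ha hb
    rcases lt_trichotomy a b with hlt | heq | hgt
    · exact absurd hab (Nat.ne_of_lt (visits_lt hlt hb.2))
    · exact heq
    · exact absurd hab.symm (Nat.ne_of_lt (visits_lt hgt ha.2))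
  calc ∑ i ∈ Finset.Icc 1 n, (wgt X u i ω * dev F U u i ω)^2
      ≤ ∑ i ∈ Finset.Icc 1 n, (if X i ω = u then (1:ℝ)/((visits X u i ω : ℝ))^2 else 0) :=
        Finset.sum_le_sum step1
    _ = ∑ i ∈ (Finset.Icc 1 n).filter (fun i => X i ω = u),
          (1:ℝ)/((visits X u i ω : ℝ))^2 := (Finset.sum_filter _ _).symm
    _ = ∑ k ∈ ((Finset.Icc 1 n).filter (fun i => X i ω = u)).image (fun i => visits X u i ω),
          (1:ℝ)/((k:ℝ))^2 := (Finset.sum_image (f := fun k : ℕ => (1:ℝ)/((k:ℝ))^2) hinj).symm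
    _ ≤ ∑ k ∈ Finset.Icc 1 n, (1:ℝ)/((k:ℝ))^2 := by
        refine Finset.sum_le_sum_of_subset_of_nonneg ?_ (fun k _ _ => by positivity)
        intro k hk
        simp only [Finset.mem_image, Finset.mem_filter, Finset.mem_Icc] at hk
        obtain ⟨i, ⟨⟨hi1, hi2⟩, hxi⟩, rfl⟩ := hk
        simp only [Finset.mem_Icc]
        exact ⟨visits_pos hi1 hxi, (visits_le).trans hi2⟩
    _ ≤ 2 := sum_inv_sq_le n

/-- Kronecker-type lemma. -/
lemma kron (T Z b : ℕ → ℝ) (hb : Monotone b) (hb0 : ∀ n, 0 ≤ b n)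
    (hbtop : Tendsto b atTop atTop) (L : ℝ) (hZ : Tendsto Z atTop (𝓝 L))
    (hT : ∀ n, T (n+1) = T n + b (n+1) * (Z (n+1) - Z n)) :
    Tendsto (fun n => T n / b n) atTop (𝓝 0) := by
  rw [Metric.tendsto_nhds]
  intro ε hε
  have hδ : 0 < ε/6 := by positivity
  set δ := ε/6 with hδdef
  obtain ⟨N, hN⟩ := Metric.tendsto_atTop.1 hZ δ hδ
  have hZZ : ∀ i, N ≤ i → ∀ j, N ≤ j → |Z i - Z j| ≤ 2*δ := by
    intro i hi j hj
    have h1 := hN i hi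
    have h2 := hN j hj
    rw [Real.dist_eq] at h1 h2
    have h3 := abs_sub_le (Z i) L (Z j)
    rw [abs_sub_comm L (Z j)] at h3
    linarith
  have abel : ∀ n, N ≤ n → T n = T N + b n * (Z n - Z N)
      - ∑ i ∈ Finset.Ico N n, (b (i+1) - b i) * (Z i - Z N) := by
    intro n hn
    induction n, hn using Nat.le_induction with
    | base => simp
    | succ n hn ih =>
      rw [Finset.sum_Ico_succ_top hn, hT n, ih]
      ring
  have tel : ∀ n, N ≤ n → ∑ i ∈ Finset.Ico N n, (b (i+1) - b i) = b n - b N := by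
    intro n hn
    rw [Finset.sum_Ico_eq_sub _ hn, Finset.sum_range_sub (f := b), Finset.sum_range_sub (f := b)]
    ring
  have hbound : ∀ n, N ≤ n → |T n| ≤ |T N| + 4*δ*(b n) := by
    intro n hn
    have h1 : |b n * (Z n - Z N)| ≤ b n * (2*δ) := by
      rw [abs_mul, abs_of_nonneg (hb0 n)]
      exact mul_le_mul_of_nonneg_left (hZZ n hn N le_rfl) (hb0 n)
    have h2 : |∑ i ∈ Finset.Ico N n, (b (i+1) - b i) * (Z i - Z N)| ≤ (b n - b N)*(2*δ) := by
      calc |∑ i ∈ Finset.Ico N n, (b (i+1) - b i) * (Z i - Z N)|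
          ≤ ∑ i ∈ Finset.Ico N n, |(b (i+1) - b i) * (Z i - Z N)| :=
            Finset.abs_sum_le_sum_abs _ _
        _ ≤ ∑ i ∈ Finset.Ico N n, (b (i+1) - b i) * (2*δ) := by
            refine Finset.sum_le_sum fun i hi => ?_
            rw [abs_mul, abs_of_nonneg (sub_nonneg.2 (hb (Nat.le_succ i)))]
            exact mul_le_mul_of_nonneg_left (hZZ i (Finset.mem_Ico.1 hi).1 N le_rfl)
              (sub_nonneg.2 (hb (Nat.le_succ i)))
        _ = (b n - b N) * (2*δ) := by rw [← Finset.sum_mul, tel n hn]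
    rw [abel n hn]
    have h4 : |T N + b n * (Z n - Z N) - ∑ i ∈ Finset.Ico N n, (b (i+1) - b i) * (Z i - Z N)|
        ≤ |T N| + |b n * (Z n - Z N)| + |∑ i ∈ Finset.Ico N n, (b (i+1) - b i) * (Z i - Z N)| := by
      calc |T N + b n * (Z n - Z N) - ∑ i ∈ Finset.Ico N n, (b (i+1) - b i) * (Z i - Z N)|
          ≤ |T N + b n * (Z n - Z N)| + |∑ i ∈ Finset.Ico N n, (b (i+1) - b i) * (Z i - Z N)| :=
            abs_sub _ _
        _ ≤ |T N| + |b n * (Z n - Z N)| + |∑ i ∈ Finset.Ico N n, (b (i+1) - b i) * (Z i - Z N)| := by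
            linarith [abs_add_le (T N) (b n * (Z n - Z N))]
    have hbN : 0 ≤ b N := hb0 N
    have hbn : 0 ≤ b n := hb0 n
    nlinarith
  have hev1 : ∀ᶠ n in atTop, max (|T N|/δ) 1 ≤ b n := hbtop.eventually_ge_atTop _
  have hev2 : ∀ᶠ n in atTop, N ≤ n := eventually_ge_atTop N
  filter_upwards [hev1, hev2] with n h1 h2
  have hbn1 : (1:ℝ) ≤ b n := le_trans (le_max_right _ _) h1
  have hbn : 0 < b n := lt_of_lt_of_le one_pos hbn1
  have hTN : |T N| ≤ δ * b n := by
    have := le_trans (le_max_left (|T N|/δ) 1) h1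
    rw [div_le_iff₀ hδ] at this
    linarith
  rw [Real.dist_eq, sub_zero, abs_div, abs_of_nonneg (hb0 n), div_lt_iff₀ hbn]
  have := hbound n h2
  have h6 : ε = 6 * δ := by rw [hδdef]; ring
  nlinarith

/-- If the weighted martingale converges and `u` is visited infinitely often, then the
empirical frequency at `u` converges to `F u`. -/
lemma fhat_tendsto (hZ : ∃ L, Tendsto (fun n => ZZ F U X u n ω) atTop (𝓝 L))
    (hinf : ∃ᶠ n in atTop, X n ω = u) :
    Tendsto (fun n => Fhat F U X u n ω) atTop (𝓝 (F u)) := by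
  obtain ⟨L, hZ⟩ := hZ
  have hinf' : {n | X n ω = u}.Infinite := Nat.frequently_atTop_iff_infinite.1 hinf
  have hvis : Tendsto (fun n => visits X u n ω) atTop atTop := by
    refine tendsto_atTop_atTop_of_monotone visits_mono ?_
    intro K
    induction K with
    | zero => exact ⟨0, Nat.zero_le _⟩
    | succ K ih =>
      obtain ⟨n, hn⟩ := ih
      obtain ⟨j, hj, hnj⟩ := hinf'.exists_gt n
      exact ⟨j, by have := visits_lt hnj hj; omega⟩
  have hbR : Tendsto (fun n => (visits X u n ω : ℝ)) atTop atTop :=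
    tendsto_natCast_atTop_atTop.comp hvis
  have hkron := kron (fun n => Mart F U X u n ω) (fun n => ZZ F U X u n ω)
    (fun n => (visits X u n ω : ℝ)) (fun a b hab => Nat.cast_le.2 (visits_mono hab))
    (fun n => by positivity) hbR L hZ (fun n => mart_succ)
  have hev : ∀ᶠ n in atTop, 1 ≤ visits X u n ω := hvis.eventually_ge_atTop 1
  have heq : ∀ᶠ n in atTop,
      Mart F U X u n ω / (visits X u n ω : ℝ) + F u = Fhat F U X u n ω :=
    hev.mono fun n hn => (fhat_eq hn).symm
  have h2 : Tendsto (fun n => Mart F U X u n ω / (visits X u n ω : ℝ) + F u)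
      atTop (𝓝 (0 + F u)) := hkron.add tendsto_const_nhds
  rw [zero_add] at h2
  exact h2.congr' heq

end PW

/-! ### The deterministic endgame -/

lemma determin (m : ℕ) (F : ℕ → ℝ) (hFmono : StrictMonoOn F (Set.Icc 1 m))
    (p Δ₁ Δ₂ : ℝ) (hΔ₁ : 0 < Δ₁) (hΔ₂ : 0 < Δ₂)
    (x : ℕ → ℕ) (hxrange : ∀ n, 1 ≤ n → x n ∈ Set.Icc 1 m)
    (G : ℕ → ℕ → ℝ)
    (hconv : ∀ u ∈ Set.Icc 1 m, (∃ᶠ n in atTop, x n = u) → Tendsto (G u) atTop (𝓝 (F u)))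
    (hup : ∀ n, 1 ≤ n → G (x n) n ≤ p - Δ₁ → x (n+1) = min (x n + 1) m)
    (hdown : ∀ n, 1 ≤ n → p + Δ₂ ≤ G (x n) n → x (n+1) = max (x n - 1) 1)
    (hnone : ∀ u ∈ Set.Icc 1 m, F u ∉ Set.Icc (p - Δ₁) (p + Δ₂))
    (u₀ : ℕ) (hu₀ : u₀ ∈ Set.Icc 1 m) (hu₀' : u₀ + 1 ∈ Set.Icc 1 m)
    (hbelow : F u₀ < p - Δ₁) (habove : p + Δ₂ < F (u₀+1)) :
    {u : ℕ | ∃ᶠ n in atTop, x n = u} = {u₀, u₀ + 1} := by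
  have hpΔ : p - Δ₁ < p + Δ₂ := by linarith
  -- S basic facts
  have hSsub : ∀ u : ℕ, (∃ᶠ n in atTop, x n = u) → u ∈ Set.Icc 1 m := by
    intro u hu
    rcases (hu.and_eventually (eventually_ge_atTop 1)).exists with ⟨n, hxn, hn⟩
    exact hxn ▸ hxrange n hn
  have hdi : ∀ u ∈ Set.Icc 1 m, F u < p - Δ₁ ∨ p + Δ₂ < F u := by
    intro u hu
    have h := hnone u hu
    rw [Set.mem_Icc] at h
    push_neg at h
    rcases lt_or_ge (F u) (p - Δ₁) with h1 | h1
    · exact Or.inl h1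
    · exact Or.inr (h h1)
  -- S nonempty
  have hne : ∃ u, ∃ᶠ n in atTop, x n = u := by
    by_contra h
    push_neg at h
    have h2 : ∀ᶠ n in atTop, ∀ u ∈ Finset.Icc 1 m, x n ≠ u := by
      rw [eventually_all_finset]
      intro u _
      have := h u
      exact this
    rcases (h2.and (eventually_ge_atTop 1)).exists with ⟨n, hn, h1⟩
    have hx := hxrange n h1
    rw [Set.mem_Icc] at hx
    exact hn (x n) (Finset.mem_Icc.2 hx) rfl
  -- one-step structure lemmas
  have hupS : ∀ u : ℕ, (∃ᶠ n in atTop, x n = u) → F u < p - Δ₁ →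
      u < m ∧ (∃ᶠ n in atTop, x n = u + 1) := by
    intro u huS hFu
    have hum := hSsub u huS
    have hlt : u < m := by
      rcases lt_or_eq_of_le hum.2 with h | h
      · exact h
      · exfalso
        have hb2 : u₀ + 1 ≤ m := hu₀'.2
        have : F (u₀+1) ≤ F u := hFmono.monotoneOn hu₀' hum (by omega)
        linarith
    have hev : ∀ᶠ n in atTop, G u n ≤ p - Δ₁ :=
      ((hconv u hum huS).eventually_lt_const hFu).mono fun n hn => le_of_lt hn
    have hfr : ∃ᶠ n in atTop, x (n+1) = u + 1 := by
      refine ((huS.and_eventually (hev.and (eventually_ge_atTop 1))).mono ?_)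
      rintro n ⟨hxn, hGn, h1n⟩
      have := hup n h1n (by rw [hxn]; exact hGn)
      rw [hxn] at this
      rw [this, min_eq_left (by omega)]
    refine ⟨hlt, ?_⟩
    rw [frequently_atTop] at hfr ⊢
    intro a
    obtain ⟨n, hn, hxn⟩ := hfr a
    exact ⟨n+1, by omega, hxn⟩
  have hdownS : ∀ u : ℕ, (∃ᶠ n in atTop, x n = u) → p + Δ₂ < F u →
      1 < u ∧ (∃ᶠ n in atTop, x n = u - 1) := by
    intro u huS hFu
    have hum := hSsub u huS
    have hlt : 1 < u := by
      rcases lt_or_eq_of_le hum.1 with h | h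
      · omega
      · exfalso
        have hb2 : 1 ≤ u₀ := hu₀.1
        have : F u ≤ F u₀ := hFmono.monotoneOn hum hu₀ (by omega)
        linarith
    have hev : ∀ᶠ n in atTop, p + Δ₂ ≤ G u n :=
      ((hconv u hum huS).eventually_const_lt hFu).mono fun n hn => le_of_lt hn
    have hfr : ∃ᶠ n in atTop, x (n+1) = u - 1 := by
      refine ((huS.and_eventually (hev.and (eventually_ge_atTop 1))).mono ?_)
      rintro n ⟨hxn, hGn, h1n⟩
      have := hdown n h1n (by rw [hxn]; exact hGn)
      rw [hxn] at this
      rw [this, max_eq_left (by omega)]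
    refine ⟨hlt, ?_⟩
    rw [frequently_atTop] at hfr ⊢
    intro a
    obtain ⟨n, hn, hxn⟩ := hfr a
    exact ⟨n+1, by omega, hxn⟩
  -- find the straddling pair c, c+1 both visited i.o.
  have climb_up : ∀ k : ℕ, ∀ u : ℕ, (∃ᶠ n in atTop, x n = u) → m - u ≤ k → F u < p - Δ₁ →
      ∃ c : ℕ, (∃ᶠ n in atTop, x n = c) ∧ (∃ᶠ n in atTop, x n = c + 1) ∧
        F c < p - Δ₁ ∧ p + Δ₂ < F (c+1) := by
    intro k
    induction k with
    | zero =>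
      intro u huS hk hFu
      exfalso
      have h1 := (hupS u huS hFu).1
      omega
    | succ k ih =>
      intro u huS hk hFu
      obtain ⟨hlt, hS1⟩ := hupS u huS hFu
      have hum1 : u + 1 ∈ Set.Icc 1 m := ⟨by omega, by omega⟩
      rcases hdi (u+1) hum1 with h | h
      · exact ih (u+1) hS1 (by omega) h
      · exact ⟨u, huS, hS1, hFu, h⟩
  have climb_down : ∀ k : ℕ, ∀ u : ℕ, (∃ᶠ n in atTop, x n = u) → u ≤ k → p + Δ₂ < F u →
      ∃ c : ℕ, (∃ᶠ n in atTop, x n = c) ∧ (∃ᶠ n in atTop, x n = c + 1) ∧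
        F c < p - Δ₁ ∧ p + Δ₂ < F (c+1) := by
    intro k
    induction k with
    | zero =>
      intro u huS hk hFu
      exfalso
      have h1 := (hdownS u huS hFu).1
      omega
    | succ k ih =>
      intro u huS hk hFu
      obtain ⟨hlt, hS1⟩ := hdownS u huS hFu
      have hum1 : u - 1 ∈ Set.Icc 1 m := by
        have := hSsub u huS
        rw [Set.mem_Icc] at this ⊢
        omega
      rcases hdi (u-1) hum1 with h | h
      · refine ⟨u - 1, hS1, ?_, h, ?_⟩
        · have : u - 1 + 1 = u := by omega
          rw [this]
          exact huS
        · have : u - 1 + 1 = u := by omega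
          rw [this]
          exact hFu
      · exact ih (u-1) hS1 (by omega) h
  obtain ⟨c, hcS, hc1S, hcF, hc1F⟩ : ∃ c : ℕ, (∃ᶠ n in atTop, x n = c) ∧
      (∃ᶠ n in atTop, x n = c + 1) ∧ F c < p - Δ₁ ∧ p + Δ₂ < F (c+1) := by
    obtain ⟨s, hs⟩ := hne
    have hsm := hSsub s hs
    rcases hdi s hsm with h | h
    · exact climb_up m s hs (by omega) h
    · exact climb_down s s hs le_rfl h
  have hcm := hSsub c hcS
  have hc1m := hSsub (c+1) hc1S
  -- c = u₀
  have hceq : c = u₀ := by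
    by_contra hcne
    rcases lt_or_gt_of_ne hcne with h | h
    · have : F (c+1) ≤ F u₀ := hFmono.monotoneOn hc1m hu₀ (by omega)
      linarith
    · have : F (u₀+1) ≤ F c := hFmono.monotoneOn hu₀' hcm (by omega)
      linarith
  subst hceq
  -- trapping
  have hevup : ∀ᶠ n in atTop, G c n ≤ p - Δ₁ :=
    ((hconv c hcm hcS).eventually_lt_const hcF).mono fun n hn => le_of_lt hn
  have hevdn : ∀ᶠ n in atTop, p + Δ₂ ≤ G (c+1) n :=
    ((hconv (c+1) hc1m hc1S).eventually_const_lt hc1F).mono fun n hn => le_of_lt hn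
  obtain ⟨N, hN⟩ := eventually_atTop.1 ((hevup.and hevdn).and (eventually_ge_atTop 1))
  obtain ⟨n₀, hn₀N, hxn₀⟩ : ∃ n₀, N ≤ n₀ ∧ x n₀ = c := by
    rcases ((hcS.and_eventually (eventually_ge_atTop N)).exists) with ⟨n, hxn, hn⟩
    exact ⟨n, hn, hxn⟩
  have trap : ∀ j, n₀ ≤ j → x j = c ∨ x j = c + 1 := by
    intro j hj
    induction j, hj using Nat.le_induction with
    | base => exact Or.inl hxn₀
    | succ j hj ih =>
      obtain ⟨⟨hG1, hG2⟩, h1⟩ := hN j (le_trans hn₀N hj)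
      rcases ih with h | h
      · right
        have h2 := hup j h1 (by rw [h]; exact hG1)
        rw [h] at h2
        rw [h2, min_eq_left hc1m.2]
      · left
        have h2 := hdown j h1 (by rw [h]; exact hG2)
        rw [h] at h2
        rw [h2, Nat.add_sub_cancel, max_eq_left hcm.1]
  ext u
  simp only [Set.mem_setOf_eq, Set.mem_insert_iff, Set.mem_singleton_iff]
  constructor
  · intro hu
    rcases ((hu.and_eventually (eventually_ge_atTop n₀)).exists) with ⟨n, hxn, hn⟩
    rcases trap n hn with h | h
    · left; omega
    · right; omega
  · rintro (rfl | rfl)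
    · exact hcS
    · exact hc1S

/-! ### Measurability and martingale structure -/

section Meas

variable {Ω : Type*} [mΩ : MeasurableSpace Ω] {P : Measure Ω} [IsProbabilityMeasure P]
  {m : ℕ} {F : ℕ → ℝ} {U : ℕ → Ω → ℝ} {X : ℕ → Ω → ℕ}
  (hU : ∀ i, Measurable (U i))

lemma natFilt_eq (n : ℕ) : natFilt U hU n
    = ⨆ i ∈ Finset.Icc 1 n, MeasurableSpace.comap (U i) inferInstance := rfl

lemma U_meas {i n : ℕ} (h1 : 1 ≤ i) (h2 : i ≤ n) : Measurable[natFilt U hU n] (U i) := by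
  refine measurable_iff_comap_le.2 ?_
  refine le_trans ?_ (le_of_eq (natFilt_eq hU n).symm)
  exact le_iSup₂ (f := fun j (_ : j ∈ Finset.Icc 1 n) =>
    MeasurableSpace.comap (U j) inferInstance) i (Finset.mem_Icc.2 ⟨h1, h2⟩)

lemma resp_meas (hXrange : ∀ i, 1 ≤ i → ∀ ω, X i ω ∈ Set.Icc 1 m) {n : ℕ}
    (hXm : ∀ i, 1 ≤ i → i ≤ n → Measurable[natFilt U hU n] (X i))
    {i : ℕ} (h1 : 1 ≤ i) (h2 : i ≤ n) : Measurable[natFilt U hU n] (resp F U X i) := by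
  have hrep : resp F U X i = fun ω => ∑ v ∈ Finset.Icc 1 m,
      if X i ω = v then (if U i ω ≤ F v then (1:ℝ) else 0) else 0 := by
    funext ω
    rw [Finset.sum_ite_eq]
    have hx := hXrange i h1 ω
    rw [Set.mem_Icc] at hx
    rw [if_pos (Finset.mem_Icc.2 hx)]
    rfl
  rw [hrep]
  refine Finset.measurable_sum _ fun v _ => ?_
  refine Measurable.ite ?_ ?_ measurable_const
  · exact (hXm i h1 h2) (measurableSet_singleton v)
  · exact Measurable.ite ((U_meas hU h1 h2) measurableSet_Iic) measurable_const measurable_const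

lemma visits_meas {n : ℕ}
    (hXm : ∀ i, 1 ≤ i → i ≤ n → Measurable[natFilt U hU n] (X i))
    (v : ℕ) {k : ℕ} (hk : k ≤ n) :
    Measurable[natFilt U hU n] fun ω => (visits X v k ω : ℝ) := by
  have hrep : (fun ω => visits X v k ω) = fun ω =>
      ∑ i ∈ Finset.Icc 1 k, if X i ω = v then 1 else 0 :=
    funext fun ω => visits_eq_sum
  have hm : Measurable[natFilt U hU n] fun ω => visits X v k ω := by
    rw [hrep]
    refine Finset.measurable_sum _ fun i hi => ?_
    rw [Finset.mem_Icc] at hi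
    exact Measurable.ite ((hXm i hi.1 (hi.2.trans hk)) (measurableSet_singleton v))
      measurable_const measurable_const
  exact Measurable.comp measurable_from_top hm

lemma Fhat_meas {n : ℕ}
    (hXrange : ∀ i, 1 ≤ i → ∀ ω, X i ω ∈ Set.Icc 1 m)
    (hXm : ∀ i, 1 ≤ i → i ≤ n → Measurable[natFilt U hU n] (X i))
    (v : ℕ) : Measurable[natFilt U hU n] fun ω => Fhat F U X v n ω := by
  refine Measurable.div ?_ (visits_meas hU hXm v le_rfl)
  refine Finset.measurable_sum _ fun i hi => ?_
  rw [Finset.mem_Icc] at hi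
  exact Measurable.ite ((hXm i hi.1 hi.2) (measurableSet_singleton v))
    (resp_meas hU hXrange hXm hi.1 hi.2) measurable_const

/-- Adaptedness of `X`: `X i` is `ℱ n`-measurable for `1 ≤ i ≤ n+1`. -/
lemma X_meas {p Δ₁ Δ₂ : ℝ} (hrule : intervalRule m p Δ₁ Δ₂ F U X)
    (hXrange : ∀ i, 1 ≤ i → ∀ ω, X i ω ∈ Set.Icc 1 m)
    {x₀ : ℕ} (hX1 : ∀ ω, X 1 ω = x₀) :
    ∀ n, ∀ i, 1 ≤ i → i ≤ n + 1 → Measurable[natFilt U hU n] (X i) := by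
  intro n
  induction n with
  | zero =>
    intro i h1 h2
    have hi : i = 1 := by omega
    subst hi
    have : X 1 = fun _ => x₀ := funext hX1
    rw [this]
    exact measurable_const
  | succ n ih =>
    have hXm' : ∀ j, 1 ≤ j → j ≤ n + 1 → Measurable[natFilt U hU (n+1)] (X j) :=
      fun j hj1 hj2 => (ih j hj1 hj2).mono ((natFilt U hU).mono (Nat.le_succ n)) le_rfl
    intro i h1 h2
    rcases Nat.lt_or_ge i (n+2) with h | h
    · exact hXm' i h1 (by omega)
    · have hi : i = n + 2 := by omega
      subst hi
      have hrep : X (n+2) = fun ω =>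
          if Fhat F U X (X (n+1) ω) (n+1) ω ≤ p - Δ₁ then min (X (n+1) ω + 1) m
          else if p + Δ₂ ≤ Fhat F U X (X (n+1) ω) (n+1) ω then max (X (n+1) ω - 1) 1
          else X (n+1) ω := by
        funext ω
        obtain ⟨hmid, hu, hd⟩ := hrule (n+1) (by omega) ω
        by_cases hc1 : Fhat F U X (X (n+1) ω) (n+1) ω ≤ p - Δ₁
        · rw [if_pos hc1]
          exact hu hc1
        · rw [if_neg hc1]
          by_cases hc2 : p + Δ₂ ≤ Fhat F U X (X (n+1) ω) (n+1) ω
          · rw [if_pos hc2]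
            exact hd hc2
          · rw [if_neg hc2]
            exact hmid (lt_of_not_ge hc1) (lt_of_not_ge hc2)
      rw [hrep]
      have hXn1 : Measurable[natFilt U hU (n+1)] (X (n+1)) := hXm' (n+1) (by omega) le_rfl
      have hG : Measurable[natFilt U hU (n+1)]
          fun ω => Fhat F U X (X (n+1) ω) (n+1) ω := by
        have hrep2 : (fun ω => Fhat F U X (X (n+1) ω) (n+1) ω) = fun ω =>
            ∑ v ∈ Finset.Icc 1 m, if X (n+1) ω = v then Fhat F U X v (n+1) ω else 0 := by
          funext ω
          rw [Finset.sum_ite_eq]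
          have hx := hXrange (n+1) (by omega) ω
          rw [Set.mem_Icc] at hx
          rw [if_pos (Finset.mem_Icc.2 hx)]
        rw [hrep2]
        refine Finset.measurable_sum _ fun v _ => ?_
        exact Measurable.ite (hXn1 (measurableSet_singleton v))
          (Fhat_meas hU hXrange hXm' v) measurable_const
      refine Measurable.ite (hG measurableSet_Iic) ?_ ?_
      · exact (measurable_from_top (f := fun k : ℕ => min (k + 1) m)).comp hXn1
      · refine Measurable.ite ?_ ?_ hXn1
        · exact hG (measurableSet_Ici : MeasurableSet (Set.Ici (p + Δ₂)))
        · exact (measurable_from_top (f := fun k : ℕ => max (k - 1) 1)).comp hXn1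

lemma indep_U (hUindep : iIndepFun U P) (n : ℕ) :
    Indep (MeasurableSpace.comap (U (n+1)) inferInstance) (natFilt U hU n) P := by
  have h := indep_biSup_compl (fun i => (hU i).comap_le) hUindep.iIndep {n+1}
  have h1 : (⨆ i ∈ ({n+1} : Set ℕ), MeasurableSpace.comap (U i) inferInstance)
      = MeasurableSpace.comap (U (n+1)) inferInstance := by
    simp
  rw [h1] at h
  refine indep_of_indep_of_le_right h ?_
  rw [natFilt_eq]
  refine iSup₂_le fun i hi => ?_
  refine le_iSup₂_of_le i ?_ le_rfl
  simp only [Set.mem_compl_iff, Set.mem_singleton_iff]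
  rw [Finset.mem_Icc] at hi
  omega

include hU in
lemma integral_dev (hUdist : ∀ i, Measure.map (U i) P = volume.restrict (Set.Icc (0:ℝ) 1))
    {u : ℕ} (hFu : F u ∈ Set.Icc (0:ℝ) 1) (i : ℕ) :
    ∫ ω, dev F U u i ω ∂P = 0 := by
  have hind : (fun ω => (if U i ω ≤ F u then (1:ℝ) else 0))
      = Set.indicator (U i ⁻¹' Set.Iic (F u)) (fun _ => (1:ℝ)) := by
    funext ω
    by_cases h : U i ω ≤ F u <;> simp [Set.indicator, h, Set.mem_Iic]
  have hint1 : Integrable (fun ω => if U i ω ≤ F u then (1:ℝ) else 0) P := by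
    rw [hind]
    exact (integrable_const (1:ℝ)).indicator ((hU i) measurableSet_Iic)
  have hsplit : ∫ ω, dev F U u i ω ∂P
      = (∫ ω, (if U i ω ≤ F u then (1:ℝ) else 0) ∂P) - ∫ _, F u ∂P := by
    simp only [dev]
    exact integral_sub hint1 (integrable_const _)
  rw [hsplit, hind, integral_indicator_const _ ((hU i) measurableSet_Iic), integral_const]
  have hmap : P (U i ⁻¹' Set.Iic (F u)) = ENNReal.ofReal (F u) := by
    rw [← Measure.map_apply (hU i) measurableSet_Iic, hUdist i,
      Measure.restrict_apply measurableSet_Iic]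
    have hset : Set.Iic (F u) ∩ Set.Icc 0 1 = Set.Icc 0 (F u) := by
      ext y
      simp only [Set.mem_inter_iff, Set.mem_Iic, Set.mem_Icc]
      constructor
      · rintro ⟨hy1, hy2, hy3⟩
        exact ⟨hy2, hy1⟩
      · rintro ⟨hy1, hy2⟩
        exact ⟨hy2, hy1, hy2.trans hFu.2⟩
    rw [hset, Real.volume_Icc, sub_zero]
  rw [measureReal_def, hmap, ENNReal.toReal_ofReal hFu.1]
  simp

include hU in
/-- The main probabilistic fact: a.s. the weighted martingale converges. -/
lemma ZZ_ae_tendsto {p Δ₁ Δ₂ : ℝ} (hrule : intervalRule m p Δ₁ Δ₂ F U X)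
    (hXrange : ∀ i, 1 ≤ i → ∀ ω, X i ω ∈ Set.Icc 1 m)
    {x₀ : ℕ} (hX1 : ∀ ω, X 1 ω = x₀)
    (hUindep : iIndepFun U P)
    (hUdist : ∀ i, Measure.map (U i) P = volume.restrict (Set.Icc (0:ℝ) 1))
    {u : ℕ} (hFu : F u ∈ Set.Icc (0:ℝ) 1) :
    ∀ᵐ ω ∂P, ∃ L, Tendsto (fun n => ZZ F U X u n ω) atTop (𝓝 L) := by
  classical
  set ℱ := natFilt U hU with hℱ
  have hXm : ∀ n, ∀ i, 1 ≤ i → i ≤ n + 1 → Measurable[ℱ n] (X i) :=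
    X_meas hU hrule hXrange hX1
  set D : ℕ → Ω → ℝ := fun i ω => wgt X u i ω * dev F U u i ω with hD
  -- measurability of the pieces
  have hWm : ∀ n i, 1 ≤ i → i ≤ n + 1 → Measurable[ℱ n] (wgt X u i) := by
    intro n i h1 h2
    show Measurable[ℱ n] fun ω => (if X i ω = u then (1:ℝ) else 0) / (visits X u i ω : ℝ)
    refine Measurable.div ?_ ?_
    · exact Measurable.ite ((hXm n i h1 h2) (measurableSet_singleton u))
        measurable_const measurable_const
    · have hrep : (fun ω => visits X u i ω) = fun ω =>
          ∑ j ∈ Finset.Icc 1 i, if X j ω = u then 1 else 0 :=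
        funext fun ω => visits_eq_sum
      have hm2 : Measurable[ℱ n] fun ω => visits X u i ω := by
        rw [hrep]
        refine Finset.measurable_sum _ fun j hj => ?_
        rw [Finset.mem_Icc] at hj
        exact Measurable.ite ((hXm n j hj.1 (by omega)) (measurableSet_singleton u))
          measurable_const measurable_const
      exact Measurable.comp measurable_from_top hm2
  have hDevm : ∀ n i, 1 ≤ i → i ≤ n → Measurable[ℱ n] (dev F U u i) := by
    intro n i h1 h2
    show Measurable[ℱ n] fun ω => (if U i ω ≤ F u then (1:ℝ) else 0) - F u
    exact (Measurable.ite ((U_meas hU h1 h2) measurableSet_Iic) measurable_const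
      measurable_const).sub measurable_const
  have hDm : ∀ n i, 1 ≤ i → i ≤ n → Measurable[ℱ n] (D i) :=
    fun n i h1 h2 => (hWm n i h1 (by omega)).mul (hDevm n i h1 h2)
  have hDglob : ∀ i, 1 ≤ i → Measurable (D i) :=
    fun i h1 => ((hDm i i h1 le_rfl).mono (ℱ.le i) le_rfl)
  have hdevglob : ∀ i, Measurable (dev F U u i) := by
    intro i
    show Measurable fun ω => (if U i ω ≤ F u then (1:ℝ) else 0) - F u
    exact (Measurable.ite ((hU i) measurableSet_Iic) measurable_const
      measurable_const).sub measurable_const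
  -- pointwise bounds
  have hDb : ∀ i ω, |D i ω| ≤ 1 := by
    intro i ω
    have : |D i ω| = |wgt X u i ω| * |dev F U u i ω| := by
      rw [hD]
      exact abs_mul _ _
    rw [this]
    calc |wgt X u i ω| * |dev F U u i ω| ≤ 1 * 1 :=
          mul_le_mul wgt_abs_le (dev_abs_le hFu) (abs_nonneg _) zero_le_one
      _ = 1 := one_mul 1
  have hZD : ∀ n, (fun ω => ZZ F U X u n ω) = fun ω => ∑ i ∈ Finset.Icc 1 n, D i ω :=
    fun n => rfl
  have hZm : ∀ n, Measurable[ℱ n] (fun ω => ZZ F U X u n ω) := by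
    intro n
    rw [hZD]
    refine Finset.measurable_sum _ fun i hi => ?_
    rw [Finset.mem_Icc] at hi
    exact hDm n i hi.1 hi.2
  have hZglob : ∀ n, Measurable (fun ω => ZZ F U X u n ω) :=
    fun n => (hZm n).mono (ℱ.le n) le_rfl
  have hZb : ∀ n ω, |ZZ F U X u n ω| ≤ (n:ℝ) := by
    intro n ω
    calc |ZZ F U X u n ω| ≤ ∑ i ∈ Finset.Icc 1 n, |D i ω| :=
          Finset.abs_sum_le_sum_abs _ _
      _ ≤ ∑ i ∈ Finset.Icc 1 n, 1 := Finset.sum_le_sum fun i _ => hDb i ω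
      _ = (n:ℝ) := by simp [Nat.card_Icc]
  have hZint : ∀ n, Integrable (fun ω => ZZ F U X u n ω) P := by
    intro n
    refine (integrable_const (n:ℝ)).mono' (hZglob n).aestronglyMeasurable
      (ae_of_all _ fun ω => ?_)
    simpa [Real.norm_eq_abs] using hZb n ω
  have hDint : ∀ i, 1 ≤ i → Integrable (D i) P := by
    intro i h1
    refine (integrable_const (1:ℝ)).mono' (hDglob i h1).aestronglyMeasurable
      (ae_of_all _ fun ω => ?_)
    simpa [Real.norm_eq_abs] using hDb i ω
  have hdevint : ∀ i, Integrable (dev F U u i) P := by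
    intro i
    refine (integrable_const (1:ℝ)).mono' (hdevglob i).aestronglyMeasurable
      (ae_of_all _ fun ω => ?_)
    simpa [Real.norm_eq_abs] using dev_abs_le (i := i) (ω := ω) hFu
  -- the martingale property
  have hmart : Martingale (fun n ω => ZZ F U X u n ω) ℱ P := by
    refine martingale_nat (fun n => (hZm n).stronglyMeasurable) hZint (fun n => ?_)
    have hsplit : (fun ω => ZZ F U X u (n+1) ω) = (fun ω => ZZ F U X u n ω) + D (n+1) := by
      funext ω
      simp only [Pi.add_apply]
      exact Finset.sum_Icc_succ_top (by omega) _
    rw [hsplit]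
    have hDcond : P[D (n+1)|ℱ n] =ᵐ[P] 0 := by
      have hDrw : D (n+1) = wgt X u (n+1) * dev F U u (n+1) := rfl
      have hmul : P[D (n+1)|ℱ n] =ᵐ[P] wgt X u (n+1) * P[dev F U u (n+1)|ℱ n] := by
        rw [hDrw]
        exact condExp_mul_of_stronglyMeasurable_left
          ((hWm n (n+1) (by omega) le_rfl).stronglyMeasurable)
          (hDrw ▸ hDint (n+1) (by omega)) (hdevint (n+1))
      have hsm : StronglyMeasurable[MeasurableSpace.comap (U (n+1)) inferInstance]
          (dev F U u (n+1)) := by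
        have hU' : Measurable[MeasurableSpace.comap (U (n+1)) inferInstance] (U (n+1)) :=
          measurable_iff_comap_le.2 le_rfl
        refine Measurable.stronglyMeasurable ?_
        show Measurable[MeasurableSpace.comap (U (n+1)) inferInstance]
          fun ω => (if U (n+1) ω ≤ F u then (1:ℝ) else 0) - F u
        exact (Measurable.ite (hU' measurableSet_Iic) measurable_const
          measurable_const).sub measurable_const
      have hdevcond : P[dev F U u (n+1)|ℱ n] =ᵐ[P]
          fun _ => ∫ ω, dev F U u (n+1) ω ∂P :=
        condExp_indep_eq ((hU (n+1)).comap_le) (ℱ.le n) hsm (indep_U hU hUindep n)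
      filter_upwards [hmul, hdevcond] with ω h1 h2
      rw [h1, Pi.mul_apply, h2, integral_dev hU hUdist hFu (n+1), mul_zero, Pi.zero_apply]
    have h1 := condExp_add (μ := P) (m := ℱ n) (hZint n) (hDint (n+1) (by omega))
    have h2 : P[(fun ω => ZZ F U X u n ω)|ℱ n] = fun ω => ZZ F U X u n ω :=
      condExp_of_stronglyMeasurable (ℱ.le n) (hZm n).stronglyMeasurable (hZint n)
    refine EventuallyEq.symm ?_
    refine h1.trans ?_
    rw [h2]
    filter_upwards [hDcond] with ω hω
    rw [Pi.add_apply, hω, Pi.zero_apply, add_zero]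
  -- orthogonality of increments
  have hDprodint : ∀ i j, 1 ≤ i → 1 ≤ j → Integrable (fun ω => D i ω * D j ω) P := by
    intro i j hi hj
    refine (integrable_const (1:ℝ)).mono'
      (((hDglob i hi).mul (hDglob j hj)).aestronglyMeasurable) (ae_of_all _ fun ω => ?_)
    rw [Real.norm_eq_abs, abs_mul]
    calc |D i ω| * |D j ω| ≤ 1 * 1 :=
          mul_le_mul (hDb i ω) (hDb j ω) (abs_nonneg _) zero_le_one
      _ = 1 := one_mul 1
  have horth : ∀ i j, 1 ≤ j → j < i → ∫ ω, D i ω * D j ω ∂P = 0 := by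
    intro i j hj hji
    have hrw : (fun ω => D i ω * D j ω)
        = (fun ω => D j ω * wgt X u i ω) * dev F U u i := by
      funext ω
      simp only [Pi.mul_apply, hD]
      ring
    have hf : Measurable[ℱ (i-1)] (fun ω => D j ω * wgt X u i ω) := by
      have h1 : Measurable[ℱ (i-1)] (D j) := hDm (i-1) j hj (by omega)
      have h2 : Measurable[ℱ (i-1)] (wgt X u i) := hWm (i-1) i (by omega) (by omega)
      exact h1.mul h2
    have hiind : Indep (MeasurableSpace.comap (U i) inferInstance) (ℱ (i-1)) P := by
      have h := indep_U hU hUindep (i-1)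
      rwa [Nat.sub_add_cancel (show 1 ≤ i by omega)] at h
    have hgm : Measurable[MeasurableSpace.comap (U i) inferInstance] (dev F U u i) := by
      have hU' : Measurable[MeasurableSpace.comap (U i) inferInstance] (U i) :=
        measurable_iff_comap_le.2 le_rfl
      show Measurable[MeasurableSpace.comap (U i) inferInstance]
        fun ω => (if U i ω ≤ F u then (1:ℝ) else 0) - F u
      exact (Measurable.ite (hU' measurableSet_Iic) measurable_const
        measurable_const).sub measurable_const
    have hIF : IndepFun (fun ω => D j ω * wgt X u i ω) (dev F U u i) P := by
      rw [IndepFun_iff_Indep]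
      exact indep_of_indep_of_le_right
        (indep_of_indep_of_le_left hiind.symm hf.comap_le) hgm.comap_le
    have hfint : Integrable (fun ω => D j ω * wgt X u i ω) P := by
      refine (integrable_const (1:ℝ)).mono'
        (((hDglob j hj).mul ((hWm i i (by omega) (by omega)).mono (ℱ.le i)
          le_rfl)).aestronglyMeasurable) (ae_of_all _ fun ω => ?_)
      rw [Real.norm_eq_abs, abs_mul]
      calc |D j ω| * |wgt X u i ω| ≤ 1 * 1 :=
            mul_le_mul (hDb j ω) wgt_abs_le (abs_nonneg _) zero_le_one
        _ = 1 := one_mul 1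
    have := IndepFun.integral_mul_eq_mul_integral hIF hfint.aestronglyMeasurable (hdevint i).aestronglyMeasurable
    rw [hrw]
    rw [this, integral_dev hU hUdist hFu i, mul_zero]
  -- second moment bound
  have hsq : ∀ n, ∫ ω, (ZZ F U X u n ω)^2 ∂P ≤ 2 := by
    intro n
    have hexp : (fun ω => (ZZ F U X u n ω)^2)
        = fun ω => ∑ i ∈ Finset.Icc 1 n, ∑ j ∈ Finset.Icc 1 n, D i ω * D j ω := by
      funext ω
      rw [sq, show ZZ F U X u n ω = ∑ i ∈ Finset.Icc 1 n, D i ω from rfl,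
        Finset.sum_mul_sum]
    have h1 : ∫ ω, (ZZ F U X u n ω)^2 ∂P
        = ∑ i ∈ Finset.Icc 1 n, ∑ j ∈ Finset.Icc 1 n, ∫ ω, D i ω * D j ω ∂P := by
      rw [hexp, integral_finset_sum _ (fun i hi => integrable_finset_sum _
        fun j hj => hDprodint i j (Finset.mem_Icc.1 hi).1 (Finset.mem_Icc.1 hj).1)]
      refine Finset.sum_congr rfl fun i hi => ?_
      rw [integral_finset_sum _ fun j hj =>
        hDprodint i j (Finset.mem_Icc.1 hi).1 (Finset.mem_Icc.1 hj).1]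
    have h2 : ∀ i ∈ Finset.Icc 1 n, ∑ j ∈ Finset.Icc 1 n, ∫ ω, D i ω * D j ω ∂P
        = ∫ ω, (D i ω)^2 ∂P := by
      intro i hi
      rw [Finset.sum_eq_single i]
      · congr 1
        funext ω
        rw [sq]
      · intro j hjmem hne
        rcases lt_or_gt_of_ne hne with h | h
        · exact horth i j (Finset.mem_Icc.1 hjmem).1 h
        · have hcomm : (fun ω => D i ω * D j ω) = fun ω => D j ω * D i ω := by
            funext ω
            ring
          rw [hcomm]
          exact horth j i (Finset.mem_Icc.1 hi).1 h
      · intro hnot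
        exact absurd hi hnot
    rw [h1, Finset.sum_congr rfl h2, ← integral_finset_sum _ (fun i hi => ?_)]
    · have hptw : ∀ ω, ∑ i ∈ Finset.Icc 1 n, (D i ω)^2 ≤ 2 := fun ω => sumsq_le hFu
      have hintsum : Integrable (fun ω => ∑ i ∈ Finset.Icc 1 n, (D i ω)^2) P :=
        integrable_finset_sum _ fun i hi => by
          have := hDprodint i i (Finset.mem_Icc.1 hi).1 (Finset.mem_Icc.1 hi).1
          simpa [sq] using this
      calc ∫ ω, ∑ i ∈ Finset.Icc 1 n, (D i ω)^2 ∂P ≤ ∫ _, (2:ℝ) ∂P :=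
            integral_mono hintsum (integrable_const 2) hptw
        _ = 2 := by simp
    · have := hDprodint i i (Finset.mem_Icc.1 hi).1 (Finset.mem_Icc.1 hi).1
      simpa [sq] using this
  -- L¹ boundedness
  have hL1 : ∀ n, eLpNorm (fun ω => ZZ F U X u n ω) 1 P ≤ ((3 : NNReal) : ENNReal) := by
    intro n
    have hsqint : Integrable (fun ω => (ZZ F U X u n ω)^2) P := by
      refine (integrable_const ((n:ℝ)^2)).mono'
        (((hZglob n).pow_const 2).aestronglyMeasurable) (ae_of_all _ fun ω => ?_)
      rw [Real.norm_eq_abs, abs_pow]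
      have h1 := hZb n ω
      have h2 := abs_nonneg (ZZ F U X u n ω)
      nlinarith
    have habs : ∫ ω, |ZZ F U X u n ω| ∂P ≤ 3 := by
      have hptw : (fun ω => |ZZ F U X u n ω|) ≤ fun ω => 1 + (ZZ F U X u n ω)^2 := by
        intro ω
        show |ZZ F U X u n ω| ≤ 1 + ZZ F U X u n ω ^ 2
        nlinarith [sq_abs (ZZ F U X u n ω), abs_nonneg (ZZ F U X u n ω),
          sq_nonneg (|ZZ F U X u n ω| - 1)]
      calc ∫ ω, |ZZ F U X u n ω| ∂P ≤ ∫ ω, (1 + (ZZ F U X u n ω)^2) ∂P :=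
            integral_mono (hZint n).abs ((integrable_const 1).add hsqint) hptw
        _ = (∫ _, (1:ℝ) ∂P) + ∫ ω, (ZZ F U X u n ω)^2 ∂P :=
            integral_add (integrable_const 1) hsqint
        _ ≤ 3 := by
            rw [integral_const]
            simp only [measure_univ, ENNReal.toReal_one, probReal_univ, smul_eq_mul, one_mul]
            linarith [hsq n]
    have hnorm : ∫ ω, ‖ZZ F U X u n ω‖ ∂P ≤ 3 := by
      simpa [Real.norm_eq_abs] using habs
    have heq := ofReal_integral_norm_eq_lintegral_enorm (hZint n)
    rw [eLpNorm_one_eq_lintegral_enorm, ← heq]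
    calc ENNReal.ofReal (∫ ω, ‖ZZ F U X u n ω‖ ∂P) ≤ ENNReal.ofReal 3 :=
          ENNReal.ofReal_le_ofReal hnorm
      _ = ((3 : NNReal) : ENNReal) := by norm_num
  have hconv := hmart.submartingale.ae_tendsto_limitProcess hL1
  filter_upwards [hconv] with ω hω
  exact ⟨_, hω⟩

end Meas

/-- **Corollary 1(i), asymptotic oscillation.** If no level has `F` value in
the closed target interval, but two adjacent levels `u₀, u₀+1` straddle it, then almost
surely the set of levels visited infinitely often by the interval design is exactly
`{u₀, u₀+1}`. -/
theorem interval_design_oscillates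
    {Ω : Type*} [MeasurableSpace Ω] (P : Measure Ω) [IsProbabilityMeasure P]
    (m : ℕ) (hm : 1 ≤ m)
    (F : ℕ → ℝ) (hFmono : StrictMonoOn F (Set.Icc 1 m))
    (hF01 : ∀ v ∈ Set.Icc 1 m, F v ∈ Set.Icc (0:ℝ) 1)
    (U : ℕ → Ω → ℝ) (hUmeas : ∀ i, Measurable (U i))
    (hUindep : iIndepFun U P)
    (hUdist : ∀ i, Measure.map (U i) P = volume.restrict (Set.Icc (0:ℝ) 1))
    (X : ℕ → Ω → ℕ) (hXmeas : ∀ i, Measurable (X i))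
    (hXrange : ∀ i, 1 ≤ i → ∀ ω, X i ω ∈ Set.Icc 1 m)
    (x₀ : ℕ) (hx₀ : x₀ ∈ Set.Icc 1 m) (hX1 : ∀ ω, X 1 ω = x₀)
    (p Δ₁ Δ₂ : ℝ) (hp : p ∈ Set.Ioo (0:ℝ) 1) (hΔ₁ : 0 < Δ₁) (hΔ₂ : 0 < Δ₂)
    (hrule : intervalRule m p Δ₁ Δ₂ F U X)
    (hnone : ∀ u ∈ Set.Icc 1 m, F u ∉ Set.Icc (p - Δ₁) (p + Δ₂))
    (u₀ : ℕ) (hu₀ : u₀ ∈ Set.Icc 1 m) (hu₀' : u₀ + 1 ∈ Set.Icc 1 m)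
    (hbelow : F u₀ < p - Δ₁) (habove : p + Δ₂ < F (u₀ + 1)) :
    ∀ᵐ ω ∂P, {u : ℕ | ∃ᶠ n in atTop, X n ω = u} = {u₀, u₀ + 1} := by
  have hae : ∀ᵐ ω ∂P, ∀ u, u ∈ Set.Icc 1 m →
      ∃ L, Tendsto (fun n => ZZ F U X u n ω) atTop (𝓝 L) := by
    rw [ae_all_iff]
    intro u
    by_cases hu : u ∈ Set.Icc 1 m
    · filter_upwards [ZZ_ae_tendsto hUmeas hrule hXrange hX1 hUindep hUdist (hF01 u hu)]
        with ω h _ using h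
    · filter_upwards with ω h using absurd h hu
  filter_upwards [hae] with ω hω
  refine determin m F hFmono p Δ₁ Δ₂ hΔ₁ hΔ₂ (fun n => X n ω)
    (fun n hn => hXrange n hn ω) (fun u n => Fhat F U X u n ω) ?_ ?_ ?_ hnone u₀ hu₀ hu₀'
    hbelow habove
  · intro u hu hfreq
    exact fhat_tendsto (hω u hu) hfreq
  · intro n hn h
    exact (hrule n hn ω).2.1 h
  · intro n hn h
    exact (hrule n hn ω).2.2 h
end
end

section
/- (Point-design lock-out step.) Consider the point design with target p < 1/2. Suppose that at some time n the highest tried level h := max T_n satisfies F̂_n(h) = 1, while some tried level v < h satisfies F̂_n(v) < 1. Then X_{k+1} ≠ h for all k ≥ n: level h is never assigned again, and consequently F̂_k(h) = 1 and max T_k = h for all k ≥ n. -/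
open MeasureTheory ProbabilityTheory Filter

noncomputable section

/-- The set of tried levels after `n` subjects: `T_n = {u ∈ {1,…,m} : n_u(n) > 0}`. -/
def tried {Ω : Type*} (m : ℕ) (X : ℕ → Ω → ℕ) (n : ℕ) (ω : Ω) : Finset ℕ :=
  (Finset.Icc 1 m).filter fun u => 0 < visits X u n ω

/-- The highest tried level `h = max T_n`. -/
def highTried {Ω : Type*} (m : ℕ) (X : ℕ → Ω → ℕ) (n : ℕ) (ω : Ω) : ℕ :=
  sSup (↑(tried m X n ω) : Set ℕ)

/-- The lowest tried level `l = min T_n`. -/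
def lowTried {Ω : Type*} (m : ℕ) (X : ℕ → Ω → ℕ) (n : ℕ) (ω : Ω) : ℕ :=
  sInf (↑(tried m X n ω) : Set ℕ)

/-- The point design (raw-frequency version, no monotonization) with target `p`:
if `F̂_n(h) < p` and `h < m`, escalate to `h+1`; else if `F̂_n(l) > p` and `l > 1`,
de-escalate to `l−1`; otherwise assign the tried level whose empirical rate is closest
to `p`, ties broken in favor of the smaller level. -/
def pointRule {Ω : Type*} (m : ℕ) (p : ℝ) (F : ℕ → ℝ) (U : ℕ → Ω → ℝ)
    (X : ℕ → Ω → ℕ) : Prop :=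
  ∀ n, 1 ≤ n → ∀ ω : Ω,
    (Fhat F U X (highTried m X n ω) n ω < p ∧ highTried m X n ω < m →
      X (n + 1) ω = highTried m X n ω + 1) ∧
    (¬(Fhat F U X (highTried m X n ω) n ω < p ∧ highTried m X n ω < m) →
      (p < Fhat F U X (lowTried m X n ω) n ω ∧ 1 < lowTried m X n ω) →
      X (n + 1) ω = lowTried m X n ω - 1) ∧
    (¬(Fhat F U X (highTried m X n ω) n ω < p ∧ highTried m X n ω < m) →
      ¬(p < Fhat F U X (lowTried m X n ω) n ω ∧ 1 < lowTried m X n ω) →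
      X (n + 1) ω ∈ tried m X n ω ∧
        ∀ u ∈ tried m X n ω,
          |Fhat F U X (X (n + 1) ω) n ω - p| < |Fhat F U X u n ω - p| ∨
          (|Fhat F U X (X (n + 1) ω) n ω - p| = |Fhat F U X u n ω - p| ∧
            X (n + 1) ω ≤ u))

namespace PointAux

variable {Ω : Type*} (F : ℕ → ℝ) (U : ℕ → Ω → ℝ) (X : ℕ → Ω → ℕ)

/-- numerator of `Fhat`. -/
def numer (u k : ℕ) (ω : Ω) : ℝ :=
  ∑ i ∈ Finset.Icc 1 k, if X i ω = u then resp F U X i ω else 0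

lemma Fhat_eq (u k : ℕ) (ω : Ω) :
    Fhat F U X u k ω = numer F U X u k ω / (visits X u k ω : ℝ) := rfl

lemma resp_nonneg (i : ℕ) (ω : Ω) : 0 ≤ resp F U X i ω := by
  unfold resp; split <;> norm_num

lemma resp_le_one (i : ℕ) (ω : Ω) : resp F U X i ω ≤ 1 := by
  unfold resp; split <;> norm_num

lemma visits_cast (u k : ℕ) (ω : Ω) :
    ((visits X u k ω : ℝ)) = ∑ i ∈ Finset.Icc 1 k, if X i ω = u then (1:ℝ) else 0 := by
  unfold visits
  rw [Finset.card_filter]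
  push_cast
  exact Finset.sum_congr rfl fun i _ => by split <;> norm_num

lemma numer_succ (u k : ℕ) (ω : Ω) :
    numer F U X u (k+1) ω
      = numer F U X u k ω + (if X (k+1) ω = u then resp F U X (k+1) ω else 0) :=
  Finset.sum_Icc_succ_top (by omega) _

lemma visits_cast_succ (u k : ℕ) (ω : Ω) :
    ((visits X u (k+1) ω : ℝ))
      = (visits X u k ω : ℝ) + (if X (k+1) ω = u then (1:ℝ) else 0) := by
  rw [visits_cast, Finset.sum_Icc_succ_top (by omega), ← visits_cast]

lemma numer_nonneg (u k : ℕ) (ω : Ω) : 0 ≤ numer F U X u k ω :=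
  Finset.sum_nonneg fun i _ => by
    split
    · exact resp_nonneg F U X i ω
    · exact le_refl 0

lemma Fhat_nonneg (u k : ℕ) (ω : Ω) : 0 ≤ Fhat F U X u k ω :=
  div_nonneg (numer_nonneg F U X u k ω) (Nat.cast_nonneg _)

lemma Fhat_succ_of_ne {u k : ℕ} {ω : Ω} (hne : X (k+1) ω ≠ u) :
    Fhat F U X u (k+1) ω = Fhat F U X u k ω := by
  rw [Fhat_eq, Fhat_eq, numer_succ, visits_cast_succ]
  simp [hne]

lemma Fhat_lt_one_succ {u k : ℕ} {ω : Ω} (hvis : 0 < visits X u k ω)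
    (hlt : Fhat F U X u k ω < 1) : Fhat F U X u (k+1) ω < 1 := by
  have hN : (0:ℝ) < (visits X u k ω : ℝ) := by exact_mod_cast hvis
  have hSN : numer F U X u k ω < (visits X u k ω : ℝ) := by
    rw [Fhat_eq, div_lt_one hN] at hlt; exact hlt
  have hN1 := visits_cast_succ X u k ω
  have hS1 := numer_succ F U X u k ω
  have hresp := resp_le_one F U X (k+1) ω
  have hN1pos : (0:ℝ) < (visits X u (k+1) ω : ℝ) := by
    rw [hN1]; split <;> linarith
  rw [Fhat_eq, div_lt_one hN1pos, hS1, hN1]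
  by_cases hx : X (k+1) ω = u <;> simp [hx] <;> linarith

lemma visits_succ_nat (u k : ℕ) (ω : Ω) :
    visits X u (k+1) ω = visits X u k ω + (if X (k+1) ω = u then 1 else 0) := by
  unfold visits
  rw [Finset.card_filter, Finset.card_filter, Finset.sum_Icc_succ_top (by omega)]

lemma tried_mono {m u k : ℕ} {ω : Ω} (hu : u ∈ tried m X k ω) :
    u ∈ tried m X (k+1) ω := by
  rw [tried, Finset.mem_filter] at hu ⊢
  refine ⟨hu.1, lt_of_lt_of_le hu.2 ?_⟩
  rw [visits_succ_nat]; omega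

lemma tried_succ_mem {m u k : ℕ} {ω : Ω} (hu : u ∈ tried m X (k+1) ω) :
    u ∈ tried m X k ω ∨ X (k+1) ω = u := by
  by_cases hx : X (k+1) ω = u
  · exact Or.inr hx
  · left
    rw [tried, Finset.mem_filter] at hu ⊢
    refine ⟨hu.1, ?_⟩
    have := hu.2
    rw [visits_succ_nat, if_neg hx] at this
    omega

lemma visits_pos_of_tried {m u k : ℕ} {ω : Ω} (hu : u ∈ tried m X k ω) :
    0 < visits X u k ω := (Finset.mem_filter.mp hu).2

lemma le_highTried {m u k : ℕ} {ω : Ω} (hu : u ∈ tried m X k ω) :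
    u ≤ highTried m X k ω :=
  le_csSup (Finset.finite_toSet _).bddAbove (by exact_mod_cast hu)

lemma highTried_mem {m k : ℕ} {ω : Ω} (hne : (tried m X k ω).Nonempty) :
    highTried m X k ω ∈ tried m X k ω := by
  have hset : ((tried m X k ω : Set ℕ)).Nonempty :=
    ⟨hne.choose, by exact_mod_cast hne.choose_spec⟩
  have := Nat.sSup_mem hset (Finset.finite_toSet _).bddAbove
  exact_mod_cast this

/-- Main one-step lock-out lemma. -/
lemma lockout_step {m : ℕ} {p : ℝ} (hp : 0 < p) (hp2 : p < 1/2)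
    (hrule : pointRule m p F U X) (ω : Ω) (k : ℕ) (hk : 1 ≤ k)
    {h v : ℕ} (hh : highTried m X k ω = h)
    (hFh : Fhat F U X h k ω = 1)
    (hvmem : v ∈ tried m X k ω) (hvh : v < h) (hFv : Fhat F U X v k ω < 1) :
    X (k+1) ω ≠ h ∧ X (k+1) ω ≤ h := by
  obtain ⟨H1, H2, H3⟩ := hrule k hk ω
  have hnotesc : ¬(Fhat F U X (highTried m X k ω) k ω < p ∧ highTried m X k ω < m) := by
    rw [hh, hFh]; rintro ⟨hlt, -⟩; linarith
  by_cases hde : p < Fhat F U X (lowTried m X k ω) k ω ∧ 1 < lowTried m X k ω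
  · have hX := H2 hnotesc hde
    have hl : lowTried m X k ω ∈ tried m X k ω := by
      have : sInf (tried m X k ω : Set ℕ) ∈ (tried m X k ω : Set ℕ) :=
        Nat.sInf_mem ⟨v, by exact_mod_cast hvmem⟩
      exact_mod_cast this
    have hlh : lowTried m X k ω ≤ h := hh ▸ le_highTried X hl
    have hlt : X (k+1) ω < h := by rw [hX]; omega
    exact ⟨Nat.ne_of_lt hlt, hlt.le⟩
  · obtain ⟨hXmem, hmin⟩ := H3 hnotesc hde
    have hXle : X (k+1) ω ≤ h := hh ▸ le_highTried X hXmem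
    refine ⟨?_, hXle⟩
    intro heq
    have hv0 : (0:ℝ) ≤ Fhat F U X v k ω := Fhat_nonneg F U X v k ω
    have habs : |Fhat F U X v k ω - p| < 1 - p := by
      rw [abs_lt]; constructor <;> linarith
    have hmv := hmin v hvmem
    rw [heq, hFh] at hmv
    have h1p : |(1:ℝ) - p| = 1 - p := abs_of_nonneg (by linarith)
    rcases hmv with hlt | ⟨heq2, hle⟩
    · rw [h1p] at hlt; linarith
    · omega

end PointAux

/-- **point-design lock-out step.** Under the point design with target
`p < 1/2`, if at some time `n` the highest tried level `h = max T_n` satisfies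
`F̂_n(h) = 1` while some tried level `v < h` satisfies `F̂_n(v) < 1`, then level `h` is
never assigned again: `X_{k+1} ≠ h` for all `k ≥ n`, and consequently `F̂_k(h) = 1` and
`max T_k = h` for all `k ≥ n`. -/
theorem point_design_lock_out
    {Ω : Type*} (m : ℕ) (hm : 1 ≤ m)
    (F : ℕ → ℝ) (hFmono : StrictMonoOn F (Set.Icc 1 m))
    (hF01 : ∀ v ∈ Set.Icc 1 m, F v ∈ Set.Icc (0:ℝ) 1)
    (U : ℕ → Ω → ℝ) (X : ℕ → Ω → ℕ)
    (hXrange : ∀ i, 1 ≤ i → ∀ ω, X i ω ∈ Set.Icc 1 m)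
    (p : ℝ) (hp : 0 < p) (hp2 : p < 1 / 2)
    (hrule : pointRule m p F U X)
    (ω : Ω) (n : ℕ) (hn : 1 ≤ n)
    (hhigh : Fhat F U X (highTried m X n ω) n ω = 1)
    (hv : ∃ v ∈ tried m X n ω, v < highTried m X n ω ∧ Fhat F U X v n ω < 1) :
    ∀ k, n ≤ k →
      X (k + 1) ω ≠ highTried m X n ω ∧
      Fhat F U X (highTried m X n ω) k ω = 1 ∧
      highTried m X k ω = highTried m X n ω := by
  obtain ⟨v, hvmem, hvh, hFv⟩ := hv
  set h := highTried m X n ω with hhdef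
  have key : ∀ k, n ≤ k →
      Fhat F U X h k ω = 1 ∧ v ∈ tried m X k ω ∧ Fhat F U X v k ω < 1 ∧
      highTried m X k ω = h := by
    intro k hk
    induction k, hk using Nat.le_induction with
    | base => exact ⟨hhigh, hvmem, hFv, rfl⟩
    | succ k hk ih =>
      obtain ⟨hFh, hvm, hFv', hht⟩ := ih
      have hk1 : 1 ≤ k := le_trans hn hk
      have hstep := PointAux.lockout_step F U X hp hp2 hrule ω k hk1 hht hFh hvm hvh hFv'
      refine ⟨?_, PointAux.tried_mono X hvm,
        PointAux.Fhat_lt_one_succ F U X (PointAux.visits_pos_of_tried X hvm) hFv', ?_⟩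
      · rw [PointAux.Fhat_succ_of_ne F U X hstep.1, hFh]
      · have hmemh : h ∈ tried m X k ω := hht ▸ PointAux.highTried_mem X ⟨v, hvm⟩
        have hmemh1 : h ∈ tried m X (k+1) ω := PointAux.tried_mono X hmemh
        refine le_antisymm ?_ (PointAux.le_highTried X hmemh1)
        refine csSup_le ⟨h, by exact_mod_cast hmemh1⟩ ?_
        intro b hb
        rcases PointAux.tried_succ_mem X (by exact_mod_cast hb) with hbk | hbk
        · exact hht ▸ PointAux.le_highTried X hbk
        · exact hbk ▸ hstep.2
  intro k hk
  obtain ⟨hFh, hvm, hFv', hht⟩ := key k hk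
  have hk1 : 1 ≤ k := le_trans hn hk
  exact ⟨(PointAux.lockout_step F U X hp hp2 hrule ω k hk1 hht hFh hvm hvh hFv').1,
    hFh, hht⟩
end
end

section
/- (Section 4: the point design has positive probability of not converging to the MTD.) Consider the point design with target p ∈ (0, 1/2) and X_1 = 1. Suppose there is u* ∈ {2,…,m} with F(u*) = p (so u* is the MTD, F(u) < p for u < u*, and 0 < F(u) < 1 for u ≤ u*). Then the event consisting of: Y_i = 0 for i = 1,…,u*−1 (forcing the escalating allocations X_i = i for i = 1,…,u*) followed by Y_{u*} = 1, has probability F(u*)·∏_{u=1}^{u*−1}(1−F(u)) > 0, and on this event level u* is assigned exactly once in the entire infinite experiment. Consequently, the probability that the dose allocations converge to the MTD u* is strictly less than 1. -/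
open MeasureTheory ProbabilityTheory Filter

noncomputable section

section AuxLemmas
variable {Ω : Type*} (F : ℕ → ℝ) (U : ℕ → Ω → ℝ) (X : ℕ → Ω → ℕ)

lemma resp_nonneg (i : ℕ) (ω : Ω) : 0 ≤ resp F U X i ω := by
  unfold resp; split <;> norm_num

lemma resp_le_one (i : ℕ) (ω : Ω) : resp F U X i ω ≤ 1 := by
  unfold resp; split <;> norm_num

lemma Fhat_nonneg (u n : ℕ) (ω : Ω) : 0 ≤ Fhat F U X u n ω := by
  unfold Fhat
  apply div_nonneg _ (by positivity)
  apply Finset.sum_nonneg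
  intro i _
  split
  · exact resp_nonneg F U X i ω
  · exact le_refl 0

lemma Fhat_le_one (u n : ℕ) (ω : Ω) : Fhat F U X u n ω ≤ 1 := by
  unfold Fhat
  rcases Nat.eq_zero_or_pos (visits X u n ω) with h | h
  · simp [h]
  · rw [div_le_one (by exact_mod_cast h)]
    have hv : (visits X u n ω : ℝ) = ∑ i ∈ Finset.Icc 1 n, (if X i ω = u then (1:ℝ) else 0) := by
      unfold visits
      rw [Finset.card_filter]
      push_cast
      rfl
    rw [hv]
    apply Finset.sum_le_sum
    intro i _
    split
    · exact resp_le_one F U X i ω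
    · exact le_refl 0

lemma Fhat_eq_zero (u n : ℕ) (ω : Ω) (H : ∀ i ∈ Finset.Icc 1 n, resp F U X i ω = 0) :
    Fhat F U X u n ω = 0 := by
  unfold Fhat
  rw [Finset.sum_eq_zero, zero_div]
  intro i hi
  rw [H i hi]
  split <;> rfl

/-- Escalation lemma: with no toxicities below `ustar`, the design escalates
`X_k = k` for `k = 1, …, ustar`. -/
lemma escal (m : ℕ) (p : ℝ) (hp : 0 < p)
    (hrule : pointRule m p F U X) (hX1 : ∀ ω, X 1 ω = 1)
    (ustar : ℕ) (hustar' : ustar ≤ m) (ω : Ω)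
    (H : ∀ i, 1 ≤ i → i < ustar → X i ω = i → resp F U X i ω = 0) :
    ∀ k, 1 ≤ k → k ≤ ustar → X k ω = k := by
  suffices hS : ∀ k, k ≤ ustar → ∀ j, 1 ≤ j → j ≤ k → X j ω = j by
    intro k hk1 hk2; exact hS k hk2 k hk1 le_rfl
  intro k
  induction k with
  | zero => intro _ j hj1 hj2; omega
  | succ k IH =>
    intro hk1 j hj1 hj2
    rcases Nat.lt_or_ge j (k + 1) with hjk | hjk
    · exact IH (by omega) j hj1 (by omega)
    have hj : j = k + 1 := by omega
    subst hj
    rcases Nat.eq_zero_or_pos k with hk0 | hk0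
    · subst hk0; exact hX1 ω
    -- k ≥ 1; apply the rule at time k
    have hXk : ∀ i ∈ Finset.Icc 1 k, X i ω = i := by
      intro i hi; rw [Finset.mem_Icc] at hi
      exact IH (by omega) i hi.1 hi.2
    have hresp : ∀ i ∈ Finset.Icc 1 k, resp F U X i ω = 0 := by
      intro i hi
      have hi' := Finset.mem_Icc.mp hi
      exact H i hi'.1 (by omega) (hXk i hi)
    have htried : tried m X k ω = Finset.Icc 1 k := by
      ext u
      unfold tried visits
      simp only [Finset.mem_filter, Finset.mem_Icc, Finset.card_pos]
      constructor
      · rintro ⟨hu, hne⟩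
        obtain ⟨i, hi⟩ := hne
        rw [Finset.mem_filter, Finset.mem_Icc] at hi
        have := hXk i (Finset.mem_Icc.mpr hi.1)
        omega
      · intro hu
        refine ⟨⟨hu.1, by omega⟩, ⟨u, ?_⟩⟩
        rw [Finset.mem_filter, Finset.mem_Icc]
        exact ⟨⟨hu.1, hu.2⟩, hXk u (Finset.mem_Icc.mpr hu)⟩
    have hhigh : highTried m X k ω = k := by
      unfold highTried
      rw [htried, Finset.coe_Icc]
      exact csSup_Icc hk0
    have hrule1 := (hrule k hk0 ω).1
    rw [hhigh] at hrule1
    rw [hrule1 ⟨by rw [Fhat_eq_zero F U X k k ω hresp]; exact hp, by omega⟩]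

/-- Once `ustar` has been reached by escalation and a toxicity occurred there,
level `ustar` is never assigned again. -/
lemma never_again (m : ℕ) (hm : 1 ≤ m) (p : ℝ) (hp : 0 < p) (hp2 : p < 1 / 2)
    (hrule : pointRule m p F U X) (hX1 : ∀ ω, X 1 ω = 1)
    (ustar : ℕ) (hustar : 2 ≤ ustar) (hustar' : ustar ≤ m) (ω : Ω)
    (HX : ∀ k, 1 ≤ k → k ≤ ustar → X k ω = k)
    (Hresp : resp F U X ustar ω = 1) :
    ∀ n, 1 ≤ n → (X n ω = ustar ↔ n = ustar) := by
  have hQ : ∀ n, ustar ≤ n → ∀ k, 1 ≤ k → k ≤ n → (X k ω = ustar ↔ k = ustar) := by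
    intro n hn
    induction n, hn using Nat.le_induction with
    | base =>
      intro k hk1 hk2
      rw [HX k hk1 hk2]
    | succ n hn IH =>
      intro k hk1 hk2
      rcases Nat.lt_or_ge k (n + 1) with hkn | hkn
      · exact IH k hk1 (by omega)
      have hk : k = n + 1 := by omega
      subst hk
      have hkne : n + 1 ≠ ustar := by omega
      refine iff_of_false ?_ hkne
      -- facts at time n
      have hvis : visits X ustar n ω = 1 := by
        unfold visits
        have : (Finset.Icc 1 n).filter (fun i => X i ω = ustar) = {ustar} := by
          ext i
          simp only [Finset.mem_filter, Finset.mem_Icc, Finset.mem_singleton]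
          constructor
          · rintro ⟨⟨h1, h2⟩, h3⟩
            exact (IH i h1 h2).mp h3
          · intro hieq
            refine ⟨⟨by omega, by omega⟩, ?_⟩
            rw [hieq]
            exact (IH ustar (by omega) hn).mpr rfl
        rw [this, Finset.card_singleton]
      have hnum : (∑ i ∈ Finset.Icc 1 n, if X i ω = ustar then resp F U X i ω else 0) = 1 := by
        rw [Finset.sum_eq_single_of_mem ustar (Finset.mem_Icc.mpr ⟨by omega, hn⟩)]
        · rw [if_pos ((IH ustar (by omega) hn).mpr rfl), Hresp]
        · intro i hi hine
          rw [Finset.mem_Icc] at hi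
          rw [if_neg]
          intro hXi
          exact hine ((IH i hi.1 hi.2).mp hXi)
      have hFstar : Fhat F U X ustar n ω = 1 := by
        unfold Fhat
        rw [hnum, hvis]
        norm_num
      have hstar_mem : ustar ∈ tried m X n ω := by
        unfold tried
        rw [Finset.mem_filter, Finset.mem_Icc, hvis]
        exact ⟨⟨by omega, hustar'⟩, by omega⟩
      have hone_mem : (1 : ℕ) ∈ tried m X n ω := by
        unfold tried
        rw [Finset.mem_filter, Finset.mem_Icc]
        refine ⟨⟨le_rfl, hm⟩, ?_⟩
        unfold visits
        rw [Finset.card_pos]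
        exact ⟨1, Finset.mem_filter.mpr ⟨Finset.mem_Icc.mpr ⟨le_rfl, by omega⟩, hX1 ω⟩⟩
      have hhigh : ustar ≤ highTried m X n ω :=
        le_csSup (tried m X n ω).finite_toSet.bddAbove hstar_mem
      have hlow : lowTried m X n ω ≤ 1 :=
        csInf_le (OrderBot.bddBelow _) hone_mem
      by_cases hc1 : Fhat F U X (highTried m X n ω) n ω < p ∧ highTried m X n ω < m
      · rw [(hrule n (by omega) ω).1 hc1]
        omega
      by_cases hc2 : p < Fhat F U X (lowTried m X n ω) n ω ∧ 1 < lowTried m X n ω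
      · omega
      obtain ⟨hmem, hmin⟩ := (hrule n (by omega) ω).2.2 hc1 hc2
      intro heq
      have hmin1 := hmin 1 hone_mem
      rw [heq, hFstar] at hmin1
      have h1b : |Fhat F U X 1 n ω - p| ≤ 1 - p := by
        rw [abs_le]
        have h0 := Fhat_nonneg F U X 1 n ω
        have h1 := Fhat_le_one F U X 1 n ω
        constructor <;> linarith
      have habs : |(1:ℝ) - p| = 1 - p := abs_of_nonneg (by linarith)
      rcases hmin1 with h | ⟨_, h'⟩
      · rw [habs] at h; linarith
      · omega
  intro n hn1
  rcases le_total ustar n with h | h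
  · exact hQ n h n hn1 le_rfl
  · exact hQ ustar le_rfl n hn1 h

end AuxLemmas

/-- Auxiliary: the sets defining the escalation-then-toxicity event via the `U i`. -/
def Sfun (F : ℕ → ℝ) (ustar : ℕ) : ℕ → Set ℝ :=
  fun i => if i = ustar then Set.Iic (F ustar) else Set.Ioi (F i)

lemma Sfun_meas (F : ℕ → ℝ) (ustar i : ℕ) : MeasurableSet (Sfun F ustar i) := by
  unfold Sfun
  split
  · exact measurableSet_Iic
  · exact measurableSet_Ioi

lemma mem_Sfun_self (F : ℕ → ℝ) (ustar : ℕ) (x : ℝ) :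
    x ∈ Sfun F ustar ustar ↔ x ≤ F ustar := by
  simp [Sfun]

lemma mem_Sfun_ne (F : ℕ → ℝ) (ustar i : ℕ) (x : ℝ) (h : i ≠ ustar) :
    x ∈ Sfun F ustar i ↔ F i < x := by
  simp [Sfun, h]

/-- **Section 4.** The point design has a positive probability of not
converging to the MTD: starting from the lowest dose with target `p ∈ (0, 1/2)` and
`F(u*) = p` for some `u* ∈ {2,…,m}`, the event of no toxicities at subjects `1,…,u*−1`
(which forces the escalation `X_i = i` for `i = 1,…,u*`) followed by a toxicity at
subject `u*` has probability `F(u*)·∏_{u=1}^{u*−1}(1−F(u)) > 0`, and on this event level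
`u*` is assigned exactly once in the entire infinite experiment. Consequently, the
probability that the dose allocations converge to `u*` is strictly less than `1`. -/
theorem point_design_positive_probability_of_nonconvergence
    {Ω : Type*} [MeasurableSpace Ω] (P : Measure Ω) [IsProbabilityMeasure P]
    (m : ℕ) (hm : 1 ≤ m)
    (F : ℕ → ℝ) (hFmono : StrictMonoOn F (Set.Icc 1 m))
    (hF01 : ∀ v ∈ Set.Icc 1 m, F v ∈ Set.Icc (0:ℝ) 1)
    (U : ℕ → Ω → ℝ) (hUmeas : ∀ i, Measurable (U i))
    (hUindep : iIndepFun U P)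
    (hUdist : ∀ i, Measure.map (U i) P = volume.restrict (Set.Icc (0:ℝ) 1))
    (X : ℕ → Ω → ℕ) (hXmeas : ∀ i, Measurable (X i))
    (hXrange : ∀ i, 1 ≤ i → ∀ ω, X i ω ∈ Set.Icc 1 m)
    (hX1 : ∀ ω, X 1 ω = 1)
    (p : ℝ) (hp : 0 < p) (hp2 : p < 1 / 2)
    (hrule : pointRule m p F U X)
    (ustar : ℕ) (hustar : 2 ≤ ustar) (hustar' : ustar ≤ m)
    (hFstar : F ustar = p) :
    P {ω | (∀ i, 1 ≤ i → i < ustar → resp F U X i ω = 0) ∧ resp F U X ustar ω = 1}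
        = ENNReal.ofReal (F ustar * ∏ u ∈ Finset.Icc 1 (ustar - 1), (1 - F u)) ∧
    0 < F ustar * ∏ u ∈ Finset.Icc 1 (ustar - 1), (1 - F u) ∧
    (∀ ω ∈ {ω | (∀ i, 1 ≤ i → i < ustar → resp F U X i ω = 0) ∧
        resp F U X ustar ω = 1},
      (∀ i, 1 ≤ i → i ≤ ustar → X i ω = i) ∧
      (∀ n, 1 ≤ n → (X n ω = ustar ↔ n = ustar))) ∧
    P {ω | ∃ N, ∀ n, N ≤ n → X n ω = ustar} < 1 := by
  set E := {ω | (∀ i, 1 ≤ i → i < ustar → resp F U X i ω = 0) ∧ resp F U X ustar ω = 1}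
    with hEdef
  have hF01' : ∀ i, 1 ≤ i → i ≤ ustar → F i ∈ Set.Icc (0:ℝ) 1 := fun i h1 h2 =>
    hF01 i ⟨h1, h2.trans hustar'⟩
  have hEset : E = ⋂ i ∈ Finset.Icc 1 ustar, U i ⁻¹' (Sfun F ustar i) := by
    ext ω
    simp only [hEdef, Set.mem_setOf_eq, Set.mem_iInter, Set.mem_preimage]
    constructor
    · rintro ⟨h0, h1⟩
      have hX : ∀ k, 1 ≤ k → k ≤ ustar → X k ω = k :=
        escal F U X m p hp hrule hX1 ustar hustar' ω (fun i hi hi' _ => h0 i hi hi')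
      intro i hi
      rw [Finset.mem_Icc] at hi
      by_cases hieq : i = ustar
      · subst hieq
        rw [mem_Sfun_self]
        unfold resp at h1
        rw [hX i hi.1 hi.2] at h1
        by_contra hc
        rw [if_neg hc] at h1
        norm_num at h1
      · have hilt : i < ustar := lt_of_le_of_ne hi.2 hieq
        rw [mem_Sfun_ne F ustar i _ hieq]
        have h2 := h0 i hi.1 hilt
        unfold resp at h2
        rw [hX i hi.1 hi.2] at h2
        by_contra hc
        rw [if_pos (not_lt.mp hc)] at h2
        norm_num at h2
    · intro h
      have H : ∀ i, 1 ≤ i → i < ustar → X i ω = i → resp F U X i ω = 0 := by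
        intro i h1 h2 hXi
        have hi := h i (Finset.mem_Icc.mpr ⟨h1, h2.le⟩)
        rw [mem_Sfun_ne F ustar i _ (Nat.ne_of_lt h2)] at hi
        unfold resp
        rw [hXi, if_neg (not_le.mpr hi)]
      have hX : ∀ k, 1 ≤ k → k ≤ ustar → X k ω = k :=
        escal F U X m p hp hrule hX1 ustar hustar' ω H
      refine ⟨fun i h1 h2 => H i h1 h2 (hX i h1 h2.le), ?_⟩
      have hi := h ustar (Finset.mem_Icc.mpr ⟨by omega, le_rfl⟩)
      rw [mem_Sfun_self] at hi
      unfold resp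
      rw [hX ustar (by omega) le_rfl, if_pos hi]
  have hPi : ∀ i ∈ Finset.Icc 1 ustar,
      P (U i ⁻¹' (Sfun F ustar i))
        = ENNReal.ofReal (if i = ustar then F ustar else 1 - F i) := by
    intro i hi
    rw [Finset.mem_Icc] at hi
    have hFi := hF01' i hi.1 hi.2
    rw [← Measure.map_apply (hUmeas i) (Sfun_meas F ustar i), hUdist i,
      Measure.restrict_apply (Sfun_meas F ustar i)]
    by_cases hieq : i = ustar
    · subst hieq
      rw [if_pos rfl]
      have hset : Sfun F i i ∩ Set.Icc 0 1 = Set.Icc 0 (F i) := by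
        ext x
        simp only [Set.mem_inter_iff, Set.mem_Icc, mem_Sfun_self]
        constructor
        · rintro ⟨ha, hb, _⟩; exact ⟨hb, ha⟩
        · rintro ⟨ha, hb⟩; exact ⟨hb, ha, hb.trans hFi.2⟩
      rw [hset, Real.volume_Icc, sub_zero]
    · rw [if_neg hieq]
      have hset : Sfun F ustar i ∩ Set.Icc 0 1 = Set.Ioc (F i) 1 := by
        ext x
        simp only [Set.mem_inter_iff, Set.mem_Icc, Set.mem_Ioc,
          mem_Sfun_ne F ustar i x hieq]
        constructor
        · rintro ⟨ha, _, hb⟩; exact ⟨ha, hb⟩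
        · rintro ⟨ha, hb⟩; exact ⟨ha, hFi.1.trans ha.le, hb⟩
      rw [hset, Real.volume_Ioc]
  have hprod : P E
      = ENNReal.ofReal (F ustar * ∏ u ∈ Finset.Icc 1 (ustar - 1), (1 - F u)) := by
    rw [hEset, hUindep.meas_biInter (fun i _ => ⟨Sfun F ustar i, Sfun_meas F ustar i, rfl⟩),
      Finset.prod_congr rfl hPi, ← ENNReal.ofReal_prod_of_nonneg]
    · congr 1
      have hins : Finset.Icc 1 ustar = insert ustar (Finset.Icc 1 (ustar - 1)) := by
        ext a
        simp only [Finset.mem_Icc, Finset.mem_insert]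
        omega
      rw [hins, Finset.prod_insert (by simp only [Finset.mem_Icc]; omega), if_pos rfl]
      congr 1
      apply Finset.prod_congr rfl
      intro i hi
      rw [Finset.mem_Icc] at hi
      rw [if_neg (by omega)]
    · intro i hi
      rw [Finset.mem_Icc] at hi
      have hFi := hF01' i hi.1 hi.2
      split
      · exact (hF01' ustar (by omega) le_rfl).1
      · linarith [hFi.2]
  have hpos : 0 < F ustar * ∏ u ∈ Finset.Icc 1 (ustar - 1), (1 - F u) := by
    apply mul_pos (by rw [hFstar]; exact hp)
    apply Finset.prod_pos
    intro i hi
    rw [Finset.mem_Icc] at hi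
    have hlt : F i < F ustar :=
      hFmono (Set.mem_Icc.mpr ⟨hi.1, by omega⟩) (Set.mem_Icc.mpr ⟨by omega, hustar'⟩) (by omega)
    rw [hFstar] at hlt
    linarith
  have hpoint : ∀ ω ∈ E,
      (∀ i, 1 ≤ i → i ≤ ustar → X i ω = i) ∧
      (∀ n, 1 ≤ n → (X n ω = ustar ↔ n = ustar)) := by
    intro ω hω
    obtain ⟨h0, h1⟩ := hω
    have hX : ∀ k, 1 ≤ k → k ≤ ustar → X k ω = k :=
      escal F U X m p hp hrule hX1 ustar hustar' ω (fun i hi hi' _ => h0 i hi hi')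
    exact ⟨hX, never_again F U X m hm p hp hp2 hrule hX1 ustar hustar hustar' ω hX h1⟩
  refine ⟨hprod, hpos, hpoint, ?_⟩
  have hmeasE : MeasurableSet E := by
    rw [hEset]
    exact Finset.measurableSet_biInter _ (fun i _ => (hUmeas i) (Sfun_meas F ustar i))
  have hsub : {ω | ∃ N, ∀ n, N ≤ n → X n ω = ustar} ⊆ Eᶜ := by
    intro ω hω hmem
    obtain ⟨N, hN⟩ := hω
    have hiff := (hpoint ω hmem).2
    have hn := hN (max N ustar + 1) (by omega)
    have := (hiff (max N ustar + 1) (by omega)).mp hn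
    omega
  calc P {ω | ∃ N, ∀ n, N ≤ n → X n ω = ustar} ≤ P Eᶜ := measure_mono hsub
    _ = 1 - P E := prob_compl_eq_one_sub hmeasE
    _ < 1 := ENNReal.sub_lt_self ENNReal.one_ne_top one_ne_zero
        (by rw [hprod]; exact (ENNReal.ofReal_pos.mpr hpos).ne')
end
end
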